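/- arXiv:1212.3449 — 10 statements merged into one kernel-verified Lean document; each statement's English description precedes it below -/
import Mathlib

section
/- Let d_k denote the k-th base-4 digit of the Stoneham number α_{2,3} = ∑_{n≥1} 1/(3^n·2^{3^n}). Then for every integer n ≥ 0, the sum ∑_{k=K}^{K+3^n-1} i^{d_k}, where K = 3(3^n+1)/2 and i = e^{πi/2} is the imaginary unit, equals −i if n is odd and equals −1 if n is even. -/
/-- The Stoneham number `α_{b,c} = ∑_{n≥1} 1/(c^n · b^(c^n))`. -/
noncomputable def stoneham (b c : ℕ) : ℝ :=
  ∑' n : ℕ, 1 / ((c : ℝ) ^ (n + 1) * (b : ℝ) ^ (c ^ (n + 1)))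

/-- The `k`-th base-`b` digit of a real number `x ∈ [0,1)`:
`digit b x k = ⌊x · b^k⌋ mod b`. -/
noncomputable def digit (b : ℕ) (x : ℝ) (k : ℕ) : ℕ :=
  (⌊x * (b : ℝ) ^ k⌋ % (b : ℤ)).toNat

open Finset

lemma key1 (t : ℕ) : ∃ a, 4 ^ 3 ^ t = 1 + 3 ^ (t+1) + a * 3 ^ (t+2) := by
  induction t with
  | zero => exact ⟨0, rfl⟩
  | succ t ih =>
    obtain ⟨a, ha⟩ := ih
    refine ⟨a + 3^t*(1+3*a)^2 + 3^t*3^t*(1+3*a)^3, ?_⟩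
    have h : (4:ℕ) ^ 3 ^ (t+1) = (4 ^ 3 ^ t)^3 := by
      rw [pow_succ, pow_mul]
    rw [h, ha]
    simp only [pow_succ]
    ring

lemma key2 (n a : ℕ) : ∀ j, ∃ b, (1 + 3^(n+1) + a*3^(n+2))^j = 1 + j*3^(n+1) + b*3^(n+2) := by
  intro j
  induction j with
  | zero => exact ⟨0, by simp⟩
  | succ j ih =>
    obtain ⟨b, hb⟩ := ih
    refine ⟨a + b + j*3^n + 3*j*a*3^n + 3*b*3^n + 9*a*b*3^n, ?_⟩
    rw [pow_succ, hb]
    simp only [pow_succ]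
    ring

lemma ordl : ∀ n s : ℕ, 3^(n+1) ∣ 4^s - 1 → 3^n ∣ s := by
  intro n
  induction n with
  | zero => intro s _; exact one_dvd s
  | succ n ih =>
    intro s h
    have h' : 3^(n+1) ∣ 4^s - 1 := dvd_trans (pow_dvd_pow 3 (by omega)) h
    obtain ⟨j, hj⟩ := ih s h'
    obtain ⟨a, ha⟩ := key1 n
    obtain ⟨b, hb⟩ := key2 n a j
    have h4 : 4^s = 1 + j*3^(n+1) + b*3^(n+2) := by
      rw [hj, pow_mul, ha, hb]
    have h5 : 3^(n+2) ∣ j*3^(n+1) + b*3^(n+2) := by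
      have : 4^s - 1 = j*3^(n+1) + b*3^(n+2) := by omega
      rwa [this] at h
    have h6 : 3^(n+2) ∣ j*3^(n+1) :=
      (Nat.dvd_add_iff_left ⟨b, mul_comm _ _⟩).mpr h5
    have h7 : 3 ∣ j := by
      rcases h6 with ⟨c, hc⟩
      have : 3^(n+1) * (3*c) = 3^(n+1) * j := by
        rw [show (3:ℕ)^(n+1)*(3*c) = 3^(n+2)*c by ring, ← hc]; ring
      have hj3 : j = 3 * c := by
        have := Nat.eq_of_mul_eq_mul_left (Nat.pow_pos (n := n+1) (by norm_num : 0 < 3)) this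
        omega
      exact ⟨c, hj3⟩
    obtain ⟨c, hc⟩ := h7
    exact ⟨c, by rw [hj, hc]; ring⟩

/-- numerator of the partial-sum approximation of `α·4^k` with denominator `3^(n+1)` -/
def Wf (n k : ℕ) : ℕ := ∑ m ∈ Finset.range (n+1), 2 ^ (2*k - 3^(m+1)) * 3 ^ (n - m)

lemma Wf_succ (n k : ℕ) (h : 3^(n+1) ≤ 2*k) : Wf n (k+1) = 4 * Wf n k := by
  unfold Wf
  rw [Finset.mul_sum]
  refine Finset.sum_congr rfl fun m hm => ?_
  have hm' : m + 1 ≤ n + 1 := Finset.mem_range.mp hm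
  have h1 : 3^(m+1) ≤ 2*k :=
    le_trans (Nat.pow_le_pow_right (by norm_num) hm') h
  have h2 : 2*(k+1) - 3^(m+1) = (2*k - 3^(m+1)) + 2 := by omega
  rw [h2, pow_add]
  ring

lemma Wf_pow (n k0 : ℕ) (h : 3^(n+1) ≤ 2*k0) :
    ∀ t, Wf n (k0 + t) = 4^t * Wf n k0 := by
  intro t
  induction t with
  | zero => simp
  | succ t ih =>
    have : k0 + (t+1) = (k0 + t) + 1 := by ring
    rw [this, Wf_succ n (k0+t) (by omega), ih, pow_succ]
    ring

lemma Wf_mod3 (n k : ℕ) (h : 2*k = 3^(n+1) + 1) : Wf n k % 3 = 2 := by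
  unfold Wf
  rw [Finset.sum_range_succ]
  have h1 : 2*k - 3^(n+1) = 1 := by omega
  have h2 : n - n = 0 := by omega
  rw [h1, h2]
  have h3 : (3:ℕ) ∣ ∑ m ∈ Finset.range n, 2 ^ (2*k - 3^(m+1)) * 3 ^ (n - m) := by
    refine Finset.dvd_sum fun m hm => ?_
    have : 1 ≤ n - m := by have := Finset.mem_range.mp hm; omega
    exact Dvd.dvd.mul_left (dvd_pow_self 3 (by omega)) _
  obtain ⟨c, hc⟩ := h3
  rw [hc]
  norm_num [Nat.add_mul_mod_self_left, Nat.mul_mod_right]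

lemma coprime3 (B t : ℕ) (hB : B % 3 = 2) : Nat.Coprime 3 (4^t * B) := by
  have c34 : Nat.Coprime 3 4 := by decide
  have cB : Nat.Coprime 3 B :=
    (Nat.Prime.coprime_iff_not_dvd Nat.prime_three).mpr (by omega)
  exact Nat.Coprime.mul_right (c34.pow_right _) cB

lemma orbit_inj (n B : ℕ) (hB : B % 3 = 2) :
    Set.InjOn (fun t => (4^t * B) % 3^(n+1)) (Finset.range (3^n)) := by
  have main : ∀ t1 t2, t1 < 3^n → t2 < 3^n → t1 ≤ t2 →
      (4^t1 * B) % 3^(n+1) = (4^t2 * B) % 3^(n+1) → t1 = t2 := by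
    intro t1 t2 h1 h2 hle heq
    by_contra hne
    set s := t2 - t1 with hs
    have hspos : 0 < s := by omega
    have ht2 : t2 = t1 + s := by omega
    have hme : (4^t1 * B) * 1 ≡ (4^t1 * B) * 4^s [MOD 3^(n+1)] := by
      have : (4:ℕ)^t2 * B = (4^t1 * B) * 4^s := by rw [ht2, pow_add]; ring
      unfold Nat.ModEq
      rw [mul_one, ← this]
      exact heq
    have hcop : Nat.gcd (3^(n+1)) (4^t1 * B) = 1 :=
      Nat.Coprime.pow_left (n+1) (coprime3 B t1 hB)
    have hme2 : 1 ≡ 4^s [MOD 3^(n+1)] :=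
      Nat.ModEq.cancel_left_of_coprime hcop hme
    have hdvd : 3^(n+1) ∣ 4^s - 1 :=
      (Nat.modEq_iff_dvd' (Nat.one_le_iff_ne_zero.mpr (by positivity))).mp hme2
    have := Nat.le_of_dvd hspos (ordl n s hdvd)
    omega
  intro t1 ht1 t2 ht2 heq
  simp only [Finset.coe_range, Set.mem_Iio] at ht1 ht2
  rcases le_total t1 t2 with h | h
  · exact main t1 t2 ht1 ht2 h heq
  · exact (main t2 t1 ht2 ht1 h heq.symm).symm

lemma orbit_image (n B : ℕ) (hB : B % 3 = 2) :
    (Finset.range (3^n)).image (fun t => (4^t * B) % 3^(n+1)) =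
    (Finset.range (3^n)).image (fun v => 3*v + 2) := by
  set M := 3^n with hM
  have hN : (3:ℕ)^(n+1) = 3 * M := by rw [hM, pow_succ]; ring
  set S : Finset ℕ := (Finset.range (3*M)).filter (fun u => u % 3 = 2) with hS
  have h1 : (Finset.range M).image (fun t => (4^t * B) % 3^(n+1)) ⊆ S := by
    intro u hu
    obtain ⟨t, _, rfl⟩ := Finset.mem_image.mp hu
    refine Finset.mem_filter.mpr ⟨Finset.mem_range.mpr ?_, ?_⟩
    · rw [← hN]; exact Nat.mod_lt _ (by positivity)
    · have h3 : (3:ℕ) ∣ 3^(n+1) := dvd_pow_self 3 (by omega)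
      rw [Nat.mod_mod_of_dvd _ h3, Nat.mul_mod, Nat.pow_mod]
      simp [hB]
  have h2 : S = (Finset.range M).image (fun v => 3*v + 2) := by
    ext u
    simp only [hS, Finset.mem_filter, Finset.mem_range, Finset.mem_image]
    constructor
    · rintro ⟨h, h'⟩; exact ⟨u / 3, by omega, by omega⟩
    · rintro ⟨v, hv, rfl⟩; omega
  have hcard1 : ((Finset.range M).image (fun t => (4^t * B) % 3^(n+1))).card = M := by
    rw [Finset.card_image_of_injOn (orbit_inj n B hB), Finset.card_range]
  have hcard2 : S.card = M := by
    rw [h2, Finset.card_image_of_injective _ (fun a b h => by omega), Finset.card_range]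
  rw [← h2]
  exact Finset.eq_of_subset_of_card_le h1 (by omega)

lemma div_mod_digit (N B t : ℕ) (hN : 0 < N) :
    (4^(t+1) * B / N) % 4 = 4 * ((4^t * B) % N) / N := by
  set q := 4^t * B / N with hq
  set u := 4^t * B % N with hu
  have hum : u < N := Nat.mod_lt _ hN
  have h1 : 4^(t+1) * B = 4*u + 4*q*N := by
    have h0 : (4:ℕ)^(t+1) * B = 4 * (4^t * B) := by rw [pow_succ]; ring
    have h2 := Nat.div_add_mod (4^t * B) N
    rw [h0, ← h2, ← hq, ← hu]
    ring
  rw [h1, Nat.add_mul_div_right _ _ hN, Nat.add_mul_mod_self_left,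
    Nat.mod_eq_of_lt (Nat.div_lt_of_lt_mul (by omega))]

lemma pow3mod4 (n : ℕ) : 3^n % 4 = if Odd n then 3 else 1 := by
  induction n with
  | zero => simp
  | succ n ih =>
    rcases Nat.even_or_odd n with h | h
    · have h1 : ¬ Odd n := Nat.not_odd_iff_even.mpr h
      have h2 : Odd (n+1) := Even.add_one h
      rw [pow_succ, Nat.mul_mod, ih, if_neg h1, if_pos h2]
    · have h2 : ¬ Odd (n+1) := by simp [Nat.odd_add_one, h]
      rw [pow_succ, Nat.mul_mod, ih, if_pos h, if_neg h2]

lemma block_sum (N c d e : ℕ) (h : ∀ v, c ≤ v → v < d → (4*(3*v+2)) / N = e) :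
    ∑ v ∈ Finset.Ico c d, Complex.I ^ (4*(3*v+2) / N) = (d - c : ℕ) * Complex.I^e := by
  rw [Finset.sum_congr rfl
    (fun v hv => by rw [h v (Finset.mem_Ico.mp hv).1 (Finset.mem_Ico.mp hv).2]),
    Finset.sum_const, Nat.card_Ico, nsmul_eq_mul]

lemma count_sum (n : ℕ) :
    ∑ v ∈ Finset.range (3^n), Complex.I ^ (4*(3*v+2) / 3^(n+1)) =
    if Odd n then -Complex.I else -1 := by
  have hNM : (3:ℕ)^(n+1) = 3 * 3^n := by rw [pow_succ]; ring
  have hI2 : Complex.I^2 = -1 := Complex.I_sq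
  have hI3 : Complex.I^3 = -Complex.I := by
    rw [pow_succ, hI2]; ring
  have hm4 := pow3mod4 n
  rw [Finset.range_eq_Ico]
  rcases Nat.even_or_odd n with he | ho
  · have hno : ¬ Odd n := by simp [Nat.not_odd_iff_even, he]
    rw [if_neg hno]
    rw [if_neg hno] at hm4
    set a := 3^n / 4 with ha
    have hM : 3^n = 4*a+1 := by omega
    rw [show (0:ℕ) = 0 from rfl,
      ← Finset.sum_Ico_consecutive _ (by omega : (0:ℕ) ≤ a) (by omega : a ≤ 3^n),
      ← Finset.sum_Ico_consecutive _ (by omega : a ≤ 2*a) (by omega : 2*a ≤ 3^n),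
      ← Finset.sum_Ico_consecutive _ (by omega : 2*a ≤ 3*a+1) (by omega : 3*a+1 ≤ 3^n)]
    rw [block_sum _ _ _ 0 (fun v h1 h2 => by rw [hNM, hM]; exact Nat.div_eq_of_lt_le (by omega) (by omega)),
      block_sum _ _ _ 1 (fun v h1 h2 => by rw [hNM, hM]; exact Nat.div_eq_of_lt_le (by omega) (by omega)),
      block_sum _ _ _ 2 (fun v h1 h2 => by rw [hNM, hM]; exact Nat.div_eq_of_lt_le (by omega) (by omega)),
      block_sum _ _ _ 3 (fun v h1 h2 => by rw [hNM, hM]; exact Nat.div_eq_of_lt_le (by omega) (by omega))]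
    rw [hM]
    have c1 : a - 0 = a := by omega
    have c2 : 2*a - a = a := by omega
    have c3 : 3*a+1 - 2*a = a+1 := by omega
    have c4 : 4*a+1 - (3*a+1) = a := by omega
    rw [c1, c2, c3, c4, hI2, hI3]
    push_cast
    ring
  · rw [if_pos ho]
    rw [if_pos ho] at hm4
    set a := 3^n / 4 with ha
    have hM : 3^n = 4*a+3 := by omega
    rw [show (0:ℕ) = 0 from rfl,
      ← Finset.sum_Ico_consecutive _ (by omega : (0:ℕ) ≤ a+1) (by omega : a+1 ≤ 3^n),
      ← Finset.sum_Ico_consecutive _ (by omega : a+1 ≤ 2*a+1) (by omega : 2*a+1 ≤ 3^n),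
      ← Finset.sum_Ico_consecutive _ (by omega : 2*a+1 ≤ 3*a+2) (by omega : 3*a+2 ≤ 3^n)]
    rw [block_sum _ _ _ 0 (fun v h1 h2 => by rw [hNM, hM]; exact Nat.div_eq_of_lt_le (by omega) (by omega)),
      block_sum _ _ _ 1 (fun v h1 h2 => by rw [hNM, hM]; exact Nat.div_eq_of_lt_le (by omega) (by omega)),
      block_sum _ _ _ 2 (fun v h1 h2 => by rw [hNM, hM]; exact Nat.div_eq_of_lt_le (by omega) (by omega)),
      block_sum _ _ _ 3 (fun v h1 h2 => by rw [hNM, hM]; exact Nat.div_eq_of_lt_le (by omega) (by omega))]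
    rw [hM]
    have c1 : a+1 - 0 = a+1 := by omega
    have c2 : 2*a+1 - (a+1) = a := by omega
    have c3 : 3*a+2 - (2*a+1) = a+1 := by omega
    have c4 : 4*a+3 - (3*a+2) = a+1 := by omega
    rw [c1, c2, c3, c4, hI2, hI3]
    push_cast
    ring

lemma floor_lemma (n k : ℕ) (hk1 : 3^(n+1) + 1 ≤ 2*k) (hk2 : 2*k ≤ 5 * 3^n + 1) :
    ⌊stoneham 2 3 * (4:ℝ)^k⌋ = (Wf n k / 3^(n+1) : ℕ) := by
  set f : ℕ → ℝ := fun m => 1/((3:ℝ)^(m+1) * 2^(3^(m+1))) with hf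
  have hst : stoneham 2 3 = ∑' m, f m := by
    unfold stoneham
    norm_num [hf]
  have hfpos : ∀ m, 0 ≤ f m := fun m => by rw [hf]; positivity
  have hfle : ∀ m, f m ≤ (1/2:ℝ)^m := by
    intro m
    rw [hf]
    simp only [one_div, div_pow, one_pow]
    rw [inv_pow, inv_le_inv₀ (by positivity) (by positivity)]
    have hnat : (2:ℕ)^m ≤ 3^(m+1) * 2^(3^(m+1)) := by
      calc (2:ℕ)^m ≤ 2^(3^(m+1)) := Nat.pow_le_pow_right (by norm_num)
            (le_trans (Nat.le_of_lt (Nat.lt_pow_self (n := m) (by norm_num : 1 < 3)))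
              (Nat.pow_le_pow_right (by norm_num) (by omega)))
        _ ≤ 3^(m+1) * 2^(3^(m+1)) := Nat.le_mul_of_pos_left _ (by positivity)
    exact_mod_cast hnat
  have hsum : Summable f :=
    Summable.of_nonneg_of_le hfpos hfle (summable_geometric_of_lt_one (by norm_num) (by norm_num))
  have hsplit := Summable.sum_add_tsum_nat_add (f := f) (n+1) hsum
  set R := ∑' i, f (i + (n+1)) with hR
  have htail : Summable (fun i => f (i + (n+1))) := (summable_nat_add_iff (n+1)).mpr hsum
  have hR0 : 0 ≤ R := tsum_nonneg (fun i => hfpos _)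
  have hRle : R ≤ 2 * f (n+1) := by
    have hterm : ∀ i, f (i + (n+1)) ≤ f (n+1) * (1/2:ℝ)^i := by
      intro i
      rw [hf]
      simp only
      rw [div_pow, one_pow, div_mul_div_comm, one_mul,
        div_le_div_iff₀ (by positivity) (by positivity), one_mul, one_mul]
      have hnat : (3:ℕ)^(n+1+1) * 2^(3^(n+1+1)) * 2^i ≤ 3^(i+(n+1)+1) * 2^(3^(i+(n+1)+1)) := by
        have e0 : n+1+1 = n+2 := rfl
        rw [e0]
        have h1 : (3:ℕ)^(n+2) ≤ 3^(i+n+2) := Nat.pow_le_pow_right (by norm_num) (by omega)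
        have h2 : 3^(n+2) + i ≤ 3^(i+n+2) := by
          have : (3:ℕ)^(i+n+2) = 3^(n+2) * 3^i := by rw [← pow_add]; congr 1; omega
          have hi : i + 1 ≤ 3^i := Nat.lt_pow_self (by norm_num)
          nlinarith [Nat.pow_pos (n := n+2) (show 0 < 3 by norm_num)]
        calc (3:ℕ)^(n+2) * 2^(3^(n+2)) * 2^i = 3^(n+2) * 2^(3^(n+2)+i) := by
              rw [pow_add]; ring
          _ ≤ 3^(i+n+2) * 2^(3^(i+n+2)) := Nat.mul_le_mul h1 (Nat.pow_le_pow_right (by norm_num) h2)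
          _ = 3^(i+(n+1)+1) * 2^(3^(i+(n+1)+1)) := by ring_nf
      exact_mod_cast hnat
    calc R ≤ ∑' i, f (n+1) * (1/2:ℝ)^i := Summable.tsum_le_tsum hterm htail
            (Summable.mul_left _ (summable_geometric_of_lt_one (by norm_num) (by norm_num)))
      _ = f (n+1) * 2 := by rw [tsum_mul_left, tsum_geometric_two]
      _ = 2 * f (n+1) := by ring
  have hpart : (∑ m ∈ Finset.range (n+1), f m) * 4^k = (Wf n k : ℝ) / (3:ℝ)^(n+1) := by
    rw [Finset.sum_mul]
    unfold Wf
    rw [Nat.cast_sum, Finset.sum_div]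
    refine Finset.sum_congr rfl fun m hm => ?_
    have hm' : m + 1 ≤ n + 1 := Finset.mem_range.mp hm
    have hexp : 3^(m+1) ≤ 2*k :=
      le_trans (Nat.pow_le_pow_right (by norm_num) hm') (by omega)
    rw [hf]
    simp only
    push_cast
    have e1 : (4:ℝ)^k = 2^(2*k) := by
      rw [show (4:ℝ) = 2^2 by norm_num, ← pow_mul, Nat.mul_comm]
    have e2 : (2:ℝ)^(2*k) = 2^(2*k - 3^(m+1)) * 2^(3^(m+1)) := by
      rw [← pow_add]; congr 1; omega
    have e3 : (3:ℝ)^(n+1) = 3^(n-m) * 3^(m+1) := by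
      rw [← pow_add]; congr 1; omega
    rw [e1, e2, e3]
    have p1 : (0:ℝ) < 3^(m+1) := by positivity
    have p2 : (0:ℝ) < (2:ℝ)^(3^(m+1)) := by positivity
    field_simp
  have hx : stoneham 2 3 * 4^k = (Wf n k : ℝ)/(3:ℝ)^(n+1) + R * 4^k := by
    rw [hst, ← hsplit, add_mul, hpart]
  set q := Wf n k / 3^(n+1) with hq
  set u := Wf n k % 3^(n+1) with hu
  have hd := Nat.div_add_mod (Wf n k) (3^(n+1))
  have hult : u < 3^(n+1) := Nat.mod_lt _ (by positivity)
  have hWcast : (Wf n k : ℝ) = (3:ℝ)^(n+1) * q + u := by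
    rw [← hd]; push_cast; ring
  have h3n : 1 ≤ 3^n := Nat.one_le_pow _ _ (by norm_num)
  have hnat : 2 * 2^(2*k) * 3^(n+1) < 3^(n+2)*2^(3^(n+2)) := by
    have hexp : 2*k+1 ≤ 3^(n+2) := by
      have e : (3:ℕ)^(n+2) = 9 * 3^n := by rw [pow_add]; ring
      omega
    calc 2 * 2^(2*k) * 3^(n+1) = 3^(n+1) * 2^(2*k+1) := by rw [pow_succ]; ring
      _ ≤ 3^(n+1) * 2^(3^(n+2)) :=
          Nat.mul_le_mul_left _ (Nat.pow_le_pow_right (by norm_num) hexp)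
      _ < 3^(n+2) * 2^(3^(n+2)) :=
          Nat.mul_lt_mul_of_lt_of_le (Nat.pow_lt_pow_right (by norm_num) (by omega))
            (le_refl _) (by positivity)
  have hRT : R * 4^k < 1/(3:ℝ)^(n+1) := by
    have hb : R * 4^k ≤ 2 * f (n+1) * 4^k := by
      have : (0:ℝ) ≤ (4:ℝ)^k := by positivity
      nlinarith
    have he : 2 * f (n+1) * 4^k = (2*2^(2*k))/((3:ℝ)^(n+2)*2^(3^(n+2))) := by
      rw [hf]
      simp only
      have e1 : (4:ℝ)^k = 2^(2*k) := by
        rw [show (4:ℝ) = 2^2 by norm_num, ← pow_mul, Nat.mul_comm]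
      rw [e1]
      have : (n+1+1) = n+2 := rfl
      rw [this]
      field_simp
    have hlt : (2*2^(2*k))/((3:ℝ)^(n+2)*2^(3^(n+2))) < 1/(3:ℝ)^(n+1) := by
      rw [div_lt_div_iff₀ (by positivity) (by positivity)]
      have := (Nat.cast_lt (α := ℝ)).mpr hnat
      push_cast at this
      nlinarith [this]
    linarith
  rw [hx, hWcast]
  have hsplit2 : ((3:ℝ)^(n+1) * q + u)/(3:ℝ)^(n+1) = (q:ℝ) + (u:ℝ)/(3:ℝ)^(n+1) := by
    field_simp
  rw [hsplit2]
  rw [Int.floor_eq_iff]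
  constructor
  · push_cast
    have h1 : (0:ℝ) ≤ (u:ℝ)/(3:ℝ)^(n+1) := by positivity
    have h2 : (0:ℝ) ≤ R * 4^k := by positivity
    linarith
  · push_cast
    have h2 : ((u:ℝ)+1)/(3:ℝ)^(n+1) ≤ 1 := by
      rw [div_le_one (by positivity)]
      have : (u:ℝ) + 1 ≤ ((3:ℕ)^(n+1) : ℝ) := by exact_mod_cast hult
      push_cast at this
      linarith
    have h3 : (u:ℝ)/(3:ℝ)^(n+1) + 1/(3:ℝ)^(n+1) = ((u:ℝ)+1)/(3:ℝ)^(n+1) := by ring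
    linarith


lemma digit_eq (n k : ℕ) (hk1 : 3^(n+1) + 1 ≤ 2*k) (hk2 : 2*k ≤ 5 * 3^n + 1) :
    digit 4 (stoneham 2 3) k = (Wf n k / 3^(n+1)) % 4 := by
  unfold digit
  have hc : ((4:ℕ):ℝ) = (4:ℝ) := by norm_num
  rw [hc, floor_lemma n k hk1 hk2]
  set q := Wf n k / 3^(n+1)
  have h1 : ((q:ℤ) % ((4:ℕ):ℤ)) = ((q % 4 : ℕ) : ℤ) := by push_cast; ring
  rw [h1, Int.toNat_natCast]

theorem stmt0 (n : ℕ) :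
    ∑ k ∈ Finset.Icc (3 * (3 ^ n + 1) / 2) (3 * (3 ^ n + 1) / 2 + 3 ^ n - 1),
      Complex.I ^ (digit 4 (stoneham 2 3) k) =
    if Odd n then -Complex.I else -1 := by
  have h3n : 1 ≤ 3^n := Nat.one_le_pow _ _ (by norm_num)
  have hM2 : 3^n % 2 = 1 := Nat.odd_iff.mp (Odd.pow (by decide))
  have hNM : (3:ℕ)^(n+1) = 3 * 3^n := by rw [pow_succ]; ring
  set K := 3 * (3^n + 1) / 2 with hK
  have hK2 : 2 * K = 3^(n+1) + 3 := by omega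
  set B := Wf n (K - 1) with hB
  have hKm1 : 2 * (K - 1) = 3^(n+1) + 1 := by omega
  have hBmod : B % 3 = 2 := Wf_mod3 n (K-1) hKm1
  have hNpos : 0 < 3^(n+1) := by positivity
  have himg : Finset.Icc K (K + 3^n - 1) = (Finset.range (3^n)).image (fun t => K + t) := by
    ext x
    simp only [Finset.mem_Icc, Finset.mem_image, Finset.mem_range]
    constructor
    · rintro ⟨h1, h2⟩; exact ⟨x - K, by omega, by omega⟩
    · rintro ⟨t, ht, rfl⟩; omega
  rw [himg, Finset.sum_image (fun a _ b _ h => by omega)]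
  have hdigt : ∀ t ∈ Finset.range (3^n),
      Complex.I ^ digit 4 (stoneham 2 3) (K+t) =
      Complex.I ^ (4 * ((4^t * B) % 3^(n+1)) / 3^(n+1)) := by
    intro t ht
    have ht' : t < 3^n := Finset.mem_range.mp ht
    have hb1 : 3^(n+1) + 1 ≤ 2*(K+t) := by omega
    have hb2 : 2*(K+t) ≤ 5 * 3^n + 1 := by omega
    rw [digit_eq n (K+t) hb1 hb2]
    have hW : Wf n (K+t) = 4^(t+1) * B := by
      have h0 : K + t = (K - 1) + (t + 1) := by omega
      rw [h0, Wf_pow n (K-1) (by omega) (t+1), hB]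
    rw [hW, div_mod_digit (3^(n+1)) B t hNpos]
  rw [Finset.sum_congr rfl hdigt]
  calc ∑ t ∈ Finset.range (3^n), Complex.I ^ (4 * ((4^t * B) % 3^(n+1)) / 3^(n+1))
      = ∑ u ∈ (Finset.range (3^n)).image (fun t => (4^t * B) % 3^(n+1)),
          Complex.I ^ (4 * u / 3^(n+1)) :=
        (Finset.sum_image (f := fun u => Complex.I ^ (4 * u / 3^(n+1))) (fun a ha b hb h =>
          orbit_inj n B hBmod (Finset.mem_coe.mpr ha) (Finset.mem_coe.mpr hb) h)).symm
    _ = ∑ u ∈ (Finset.range (3^n)).image (fun v => 3*v+2), Complex.I ^ (4 * u / 3^(n+1)) := by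
        rw [orbit_image n B hBmod]
    _ = ∑ v ∈ Finset.range (3^n), Complex.I ^ (4 * (3*v+2) / 3^(n+1)) :=
        Finset.sum_image (f := fun u => Complex.I ^ (4 * u / 3^(n+1))) (fun a _ b _ h => by omega)
    _ = if Odd n then -Complex.I else -1 := count_sum n
end

section
/- Let d_k denote the k-th base-4 digit of the Stoneham number α_{2,3} = ∑_{n≥1} 1/(3^n·2^{3^n}). Then for every integer n ≥ 0 and every k with 3(3^n+1)/2 ≤ k ≤ 3(3^n+1)/2 + 3^n − 1, one has d_k = d_{3^n + k} = d_{2·3^n + k}. -/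
namespace StonehamAux

/-- Partial numerator `S(n,k) = ∑_{m=1}^{n+1} 3^{n+1-m} 2^{2k-3^m}`. -/
def Sn (n k : ℕ) : ℕ := ∑ m ∈ Finset.range (n + 1), 3 ^ (n - m) * 2 ^ (2 * k - 3 ^ (m + 1))

lemma three_pow_ge (j : ℕ) : 1 + 2 * j ≤ 3 ^ j := by
  induction j with
  | zero => simp
  | succ j ih => rw [pow_succ]; nlinarith

lemma exp_ineq (a j : ℕ) : 3 ^ a + 2 * j ≤ 3 ^ (a + j) := by
  have h1 : 1 ≤ 3 ^ a := Nat.one_le_pow _ _ (by norm_num)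
  have h2 := three_pow_ge j
  rw [pow_add]
  nlinarith

lemma summable_f : Summable (fun m : ℕ => 1 / ((3 : ℝ) ^ (m + 1) * 2 ^ (3 ^ (m + 1)))) := by
  refine Summable.of_nonneg_of_le (fun m => by positivity) (fun m => ?_) summable_geometric_two
  rw [div_pow, one_pow]
  apply one_div_le_one_div_of_le (by positivity)
  have : (2 : ℕ) ^ m ≤ 3 ^ (m + 1) * 2 ^ (3 ^ (m + 1)) := by
    have h0 : m < 3 ^ m := Nat.lt_pow_self (by norm_num)
    have h2 : (3:ℕ) ^ m ≤ 3 ^ (m + 1) := Nat.pow_le_pow_right (by norm_num) (Nat.le_succ m)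
    have h1 : m ≤ 3 ^ (m + 1) := by omega
    calc (2:ℕ) ^ m ≤ 2 ^ (3 ^ (m + 1)) := Nat.pow_le_pow_right (by norm_num) h1
      _ ≤ 3 ^ (m + 1) * 2 ^ (3 ^ (m + 1)) := Nat.le_mul_of_pos_left _ (Nat.pow_pos (by norm_num))
  exact_mod_cast this

lemma hsplit' (n : ℕ) : stoneham 2 3 =
    (∑ m ∈ Finset.range (n + 1), 1 / ((3 : ℝ) ^ (m + 1) * 2 ^ (3 ^ (m + 1)))) +
    ∑' j : ℕ, 1 / ((3 : ℝ) ^ (j + (n + 1) + 1) * 2 ^ (3 ^ (j + (n + 1) + 1))) := by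
  rw [stoneham]
  push_cast
  exact (Summable.sum_add_tsum_nat_add (n + 1) summable_f).symm

lemma hA' (n k : ℕ) (h1 : 3 ^ (n + 1) + 3 ≤ 2 * k) :
    (∑ m ∈ Finset.range (n + 1), 1 / ((3 : ℝ) ^ (m + 1) * 2 ^ (3 ^ (m + 1)))) * 4 ^ k
      = (Sn n k : ℝ) / 3 ^ (n + 1) := by
  rw [Finset.sum_mul, Sn, Nat.cast_sum, Finset.sum_div]
  apply Finset.sum_congr rfl
  intro m hm
  have hm' : m ≤ n := by simpa [Nat.lt_succ_iff] using hm
  have hle : 3 ^ (m + 1) ≤ 2 * k := by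
    have : (3:ℕ) ^ (m + 1) ≤ 3 ^ (n + 1) := Nat.pow_le_pow_right (by norm_num) (by omega)
    omega
  rw [one_div, inv_mul_eq_div, div_eq_div_iff (by positivity) (by positivity)]
  have hnat : (4:ℕ) ^ k * 3 ^ (n + 1)
      = 3 ^ (n - m) * 2 ^ (2 * k - 3 ^ (m + 1)) * (3 ^ (m + 1) * 2 ^ (3 ^ (m + 1))) := by
    have e1 : (3:ℕ) ^ (n - m) * 3 ^ (m + 1) = 3 ^ (n + 1) := by
      rw [← pow_add]; congr 1; omega
    have e2 : (2:ℕ) ^ (2 * k - 3 ^ (m + 1)) * 2 ^ (3 ^ (m + 1)) = 2 ^ (2 * k) := by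
      rw [← pow_add]; congr 1; omega
    have e3 : (4:ℕ) ^ k = 2 ^ (2 * k) := by
      rw [show (4:ℕ) = 2 ^ 2 by norm_num, ← pow_mul]
    calc (4:ℕ) ^ k * 3 ^ (n + 1) = 2 ^ (2 * k) * 3 ^ (n + 1) := by rw [e3]
      _ = (3 ^ (n - m) * 3 ^ (m + 1)) * (2 ^ (2 * k - 3 ^ (m + 1)) * 2 ^ (3 ^ (m + 1))) := by
          rw [e1, e2]; ring
      _ = _ := by ring
  exact_mod_cast hnat

lemma hterm' (n k j : ℕ) (h2 : 2 * k ≤ 3 ^ (n + 2) + 1) :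
    1 / ((3 : ℝ) ^ (j + (n + 1) + 1) * 2 ^ (3 ^ (j + (n + 1) + 1))) * 4 ^ k
      ≤ (2 / 3 ^ (n + 2)) * (1 / 4) ^ j := by
  rw [one_div, inv_mul_eq_div, div_pow, one_pow, div_mul_div_comm,
    div_le_div_iff₀ (by positivity) (by positivity)]
  have hnat : (4:ℕ) ^ k * (3 ^ (n + 2) * 4 ^ j)
      ≤ 2 * (3 ^ (j + (n + 1) + 1) * 2 ^ (3 ^ (j + (n + 1) + 1))) := by
    have e3 : (4:ℕ) ^ k = 2 ^ (2 * k) := by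
      rw [show (4:ℕ) = 2 ^ 2 by norm_num, ← pow_mul]
    have e4 : (4:ℕ) ^ j = 2 ^ (2 * j) := by
      rw [show (4:ℕ) = 2 ^ 2 by norm_num, ← pow_mul]
    have b1 : (2:ℕ) ^ (2 * k) ≤ 2 ^ (3 ^ (n + 2) + 1) :=
      Nat.pow_le_pow_right (by norm_num) (by omega)
    have b2 : (3:ℕ) ^ (n + 2) ≤ 3 ^ (j + (n + 1) + 1) :=
      Nat.pow_le_pow_right (by norm_num) (by omega)
    have b3 : (2:ℕ) ^ (3 ^ (n + 2) + 2 * j) ≤ 2 ^ (3 ^ (j + (n + 1) + 1)) := by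
      apply Nat.pow_le_pow_right (by norm_num)
      have h := exp_ineq (n + 2) j
      have heq : n + 2 + j = j + (n + 1) + 1 := by omega
      rwa [heq] at h
    calc (4:ℕ) ^ k * (3 ^ (n + 2) * 4 ^ j)
        = 2 ^ (2 * k) * 2 ^ (2 * j) * 3 ^ (n + 2) := by rw [e3, e4]; ring
      _ ≤ 2 ^ (3 ^ (n + 2) + 1) * 2 ^ (2 * j) * 3 ^ (j + (n + 1) + 1) :=
          Nat.mul_le_mul (Nat.mul_le_mul b1 le_rfl) b2
      _ = 2 * (3 ^ (j + (n + 1) + 1) * 2 ^ (3 ^ (n + 2) + 2 * j)) := by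
          rw [← pow_add]; ring_nf
      _ ≤ 2 * (3 ^ (j + (n + 1) + 1) * 2 ^ (3 ^ (j + (n + 1) + 1))) :=
          Nat.mul_le_mul le_rfl (Nat.mul_le_mul le_rfl b3)
  exact_mod_cast hnat

lemma summable_shift (n : ℕ) :
    Summable (fun j : ℕ => 1 / ((3 : ℝ) ^ (j + (n + 1) + 1) * 2 ^ (3 ^ (j + (n + 1) + 1)))) :=
  (summable_nat_add_iff (f := fun m : ℕ => 1 / ((3 : ℝ) ^ (m + 1) * 2 ^ (3 ^ (m + 1)))) (n + 1)).mpr summable_f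

lemma tail_bound (n k : ℕ) (h2 : 2 * k ≤ 3 ^ (n + 2) + 1) :
    (∑' j : ℕ, 1 / ((3 : ℝ) ^ (j + (n + 1) + 1) * 2 ^ (3 ^ (j + (n + 1) + 1)))) * 4 ^ k
      < 1 / 3 ^ (n + 1) := by
  have hTsummable := summable_shift n
  have hgs : Summable (fun j : ℕ => (2 / (3:ℝ) ^ (n + 2)) * (1 / 4) ^ j) :=
    (summable_geometric_of_lt_one (by norm_num) (by norm_num)).mul_left _
  have hls : Summable (fun j : ℕ => 1 / ((3 : ℝ) ^ (j + (n + 1) + 1) * 2 ^ (3 ^ (j + (n + 1) + 1))) * 4 ^ k) :=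
    hTsummable.mul_right _
  rw [← tsum_mul_right]
  calc ∑' j : ℕ, 1 / ((3 : ℝ) ^ (j + (n + 1) + 1) * 2 ^ (3 ^ (j + (n + 1) + 1))) * 4 ^ k
      ≤ ∑' j : ℕ, (2 / (3:ℝ) ^ (n + 2)) * (1 / 4) ^ j :=
        Summable.tsum_le_tsum (fun j => hterm' n k j h2) hls hgs
    _ = (2 / (3:ℝ) ^ (n + 2)) * (1 - 1/4)⁻¹ := by
        rw [tsum_mul_left, tsum_geometric_of_lt_one (by norm_num) (by norm_num)]
    _ < 1 / 3 ^ (n + 1) := by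
        rw [show ((1:ℝ) - 1/4)⁻¹ = 4/3 by norm_num, div_mul_div_comm,
          div_lt_div_iff₀ (by positivity) (by positivity)]
        have h3 : (3:ℝ) ^ (n + 2) = 3 * 3 ^ (n + 1) := by rw [pow_succ]; ring
        rw [h3]
        have hp : (0:ℝ) < 3 ^ (n + 1) := by positivity
        nlinarith

lemma key (n k : ℕ) (h1 : 3 ^ (n + 1) + 3 ≤ 2 * k) (h2 : 2 * k ≤ 3 ^ (n + 2) + 1) :
    (Sn n k : ℝ) / 3 ^ (n + 1) < stoneham 2 3 * 4 ^ k ∧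
    stoneham 2 3 * 4 ^ k < (Sn n k : ℝ) / 3 ^ (n + 1) + 1 / 3 ^ (n + 1) := by
  have hT0 : 0 < ∑' j : ℕ, 1 / ((3 : ℝ) ^ (j + (n + 1) + 1) * 2 ^ (3 ^ (j + (n + 1) + 1))) := by
    apply Summable.tsum_pos (summable_shift n) (fun j => by positivity) 0
    positivity
  have hTub := tail_bound n k h2
  have hk4 : (0:ℝ) < 4 ^ k := by positivity
  constructor
  · rw [hsplit' n, add_mul, hA' n k h1]
    nlinarith
  · rw [hsplit' n, add_mul, hA' n k h1]
    linarith

lemma floor_eq (n k : ℕ) (h1 : 3 ^ (n + 1) + 3 ≤ 2 * k) (h2 : 2 * k ≤ 3 ^ (n + 2) + 1) :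
    ⌊stoneham 2 3 * 4 ^ k⌋ = ((Sn n k / 3 ^ (n + 1) : ℕ) : ℤ) := by
  obtain ⟨hlo, hhi⟩ := key n k h1 h2
  have hp : (0:ℕ) < 3 ^ (n + 1) := Nat.pow_pos (by norm_num)
  have hdm := Nat.div_add_mod (Sn n k) (3 ^ (n + 1))
  have hmlt := Nat.mod_lt (Sn n k) hp
  set q := Sn n k / 3 ^ (n + 1) with hq
  rw [Int.floor_eq_iff]
  constructor
  · push_cast
    have hle : (q * 3 ^ (n + 1) : ℕ) ≤ Sn n k := Nat.div_mul_le_self _ _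
    have : (q:ℝ) ≤ (Sn n k : ℝ) / 3 ^ (n + 1) := by
      rw [le_div_iff₀ (by positivity)]
      exact_mod_cast hle
    linarith
  · push_cast
    have hlt : Sn n k + 1 ≤ (q + 1) * 3 ^ (n + 1) := by
      have : (q + 1) * 3 ^ (n + 1) = 3 ^ (n + 1) * q + 3 ^ (n + 1) := by ring
      omega
    have : (Sn n k : ℝ) / 3 ^ (n + 1) + 1 / 3 ^ (n + 1) ≤ (q:ℝ) + 1 := by
      rw [← add_div, div_le_iff₀ (by positivity)]
      have h' : ((Sn n k + 1 : ℕ) : ℝ) ≤ (((q + 1) * 3 ^ (n + 1) : ℕ) : ℝ) := by exact_mod_cast hlt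
      push_cast at h'
      linarith
    linarith

lemma digit_eq (n k : ℕ) (h1 : 3 ^ (n + 1) + 3 ≤ 2 * k) (h2 : 2 * k ≤ 3 ^ (n + 2) + 1) :
    digit 4 (stoneham 2 3) k = (Sn n k / 3 ^ (n + 1)) % 4 := by
  have h := floor_eq n k h1 h2
  rw [digit]
  norm_num
  rw [h]
  omega

lemma Sn_shift (n k j : ℕ) (h1 : 3 ^ (n + 1) ≤ 2 * k) :
    Sn n (j + k) = 4 ^ j * Sn n k := by
  rw [Sn, Sn, Finset.mul_sum]
  apply Finset.sum_congr rfl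
  intro m hm
  have hm' : m ≤ n := by simpa [Nat.lt_succ_iff] using hm
  have hle : 3 ^ (m + 1) ≤ 2 * k := by
    have : (3:ℕ) ^ (m + 1) ≤ 3 ^ (n + 1) := Nat.pow_le_pow_right (by norm_num) (by omega)
    omega
  have e3 : (4:ℕ) ^ j = 2 ^ (2 * j) := by
    rw [show (4:ℕ) = 2 ^ 2 by norm_num, ← pow_mul]
  have e : (2:ℕ) ^ (2 * (j + k) - 3 ^ (m + 1)) = 2 ^ (2 * j) * 2 ^ (2 * k - 3 ^ (m + 1)) := by
    rw [← pow_add]; congr 1; omega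
  rw [e, e3]; ring

lemma four_dvd_Sn (n k : ℕ) (h1 : 3 ^ (n + 1) + 3 ≤ 2 * k) : 4 ∣ Sn n k := by
  apply Finset.dvd_sum
  intro m hm
  have hm' : m ≤ n := by simpa [Nat.lt_succ_iff] using hm
  have hle : 3 ^ (m + 1) + 3 ≤ 2 * k := by
    have : (3:ℕ) ^ (m + 1) ≤ 3 ^ (n + 1) := Nat.pow_le_pow_right (by norm_num) (by omega)
    omega
  have h2 : 2 ≤ 2 * k - 3 ^ (m + 1) := by omega
  have : (2:ℕ) ^ 2 ∣ 2 ^ (2 * k - 3 ^ (m + 1)) := pow_dvd_pow _ h2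
  exact Dvd.dvd.mul_left (by simpa using this) _

lemma ord_dvd (n : ℕ) : (3:ℤ) ^ (n + 1) ∣ 4 ^ (3 ^ n) - 1 := by
  induction n with
  | zero => norm_num
  | succ n ih =>
    obtain ⟨t, ht⟩ := ih
    have hx : (4:ℤ) ^ (3 ^ n) = 1 + 3 ^ (n + 1) * t := by linarith
    have hcube : (4:ℤ) ^ (3 ^ (n + 1)) = (4 ^ (3 ^ n)) ^ 3 := by
      rw [← pow_mul, pow_succ]
    rw [hcube, hx]
    use t * (1 + 3 ^ (n + 1) * t + 3 ^ (2 * n + 1) * t ^ 2)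
    ring

lemma ord_dvd_nat (n j : ℕ) (hj : j = 3 ^ n ∨ j = 2 * 3 ^ n) :
    ∃ t : ℕ, 4 ^ j = 1 + 3 ^ (n + 1) * t := by
  have base := ord_dvd n
  have hd : (3:ℤ) ^ (n + 1) ∣ 4 ^ j - 1 := by
    rcases hj with rfl | rfl
    · exact base
    · have : (4:ℤ) ^ (2 * 3 ^ n) - 1 = (4 ^ (3 ^ n) - 1) * (4 ^ (3 ^ n) + 1) := by
        rw [show 2 * 3 ^ n = 3 ^ n + 3 ^ n by ring, pow_add]; ring
      rw [this]
      exact base.mul_right _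
  obtain ⟨t, ht⟩ := hd
  have ht' : (4:ℤ) ^ j = 1 + 3 ^ (n + 1) * t := by linarith
  have htnn : 0 ≤ t := by
    have h4 : (1:ℤ) ≤ 4 ^ j := by
      have : (1:ℕ) ≤ 4 ^ j := Nat.one_le_pow _ _ (by norm_num)
      exact_mod_cast this
    have hp3 : (0:ℤ) < 3 ^ (n + 1) := by positivity
    nlinarith
  refine ⟨t.toNat, ?_⟩
  have : ((4:ℕ) ^ j : ℤ) = ((1 + 3 ^ (n + 1) * t.toNat : ℕ) : ℤ) := by
    push_cast
    rw [Int.toNat_of_nonneg htnn]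
    exact_mod_cast ht'
  exact_mod_cast this

lemma digit_step (n k j : ℕ) (h1 : 3 ^ (n + 1) + 3 ≤ 2 * k)
    (h2 : 2 * (j + k) ≤ 3 ^ (n + 2) + 1) (hj : j = 3 ^ n ∨ j = 2 * 3 ^ n) :
    digit 4 (stoneham 2 3) k = digit 4 (stoneham 2 3) (j + k) := by
  have h2' : 2 * k ≤ 3 ^ (n + 2) + 1 := by omega
  have h1' : 3 ^ (n + 1) + 3 ≤ 2 * (j + k) := by omega
  rw [digit_eq n k h1 h2', digit_eq n (j + k) h1' h2]
  rw [Sn_shift n k j (by omega)]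
  obtain ⟨t, ht⟩ := ord_dvd_nat n j hj
  obtain ⟨u, hu⟩ := four_dvd_Sn n k h1
  rw [ht, add_mul, one_mul, mul_assoc, Nat.add_mul_div_left _ _ (Nat.pow_pos (by norm_num))]
  rw [hu]
  have hru : t * (4 * u) = 4 * (t * u) := by ring
  rw [hru]
  rw [Nat.add_mul_mod_self_left]

end StonehamAux

open StonehamAux

theorem stmt1 (n : ℕ) (k : ℕ) (hk1 : 3 * (3 ^ n + 1) / 2 ≤ k)
    (hk2 : k ≤ 3 * (3 ^ n + 1) / 2 + 3 ^ n - 1) :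
    digit 4 (stoneham 2 3) k = digit 4 (stoneham 2 3) (3 ^ n + k) ∧
    digit 4 (stoneham 2 3) k = digit 4 (stoneham 2 3) (2 * 3 ^ n + k) := by
  have hodd : 3 ^ n % 2 = 1 := by
    simp [Nat.pow_mod]
  have hE : 2 * (3 * (3 ^ n + 1) / 2) = 3 ^ (n + 1) + 3 := by
    have h31 : (3:ℕ) ^ (n + 1) = 3 * 3 ^ n := by rw [pow_succ]; ring
    omega
  have hpos : 1 ≤ 3 ^ n := Nat.one_le_pow _ _ (by norm_num)
  have h1 : 3 ^ (n + 1) + 3 ≤ 2 * k := by omega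
  have hk2' : 2 * k ≤ 3 ^ (n + 1) + 2 * 3 ^ n + 1 := by
    have h31 : (3:ℕ) ^ (n + 1) = 3 * 3 ^ n := by rw [pow_succ]; ring
    omega
  have h32 : (3:ℕ) ^ (n + 2) = 9 * 3 ^ n := by rw [pow_add]; ring
  have h31 : (3:ℕ) ^ (n + 1) = 3 * 3 ^ n := by rw [pow_succ]; ring
  constructor
  · exact digit_step n k (3 ^ n) h1 (by omega) (Or.inl rfl)
  · exact digit_step n k (2 * 3 ^ n) h1 (by omega) (Or.inr rfl)
end

section
/- Let a_k denote the k-th base-3 digit of the Stoneham number α_{3,5} = ∑_{n≥1} 1/(5^n·3^{5^n}). Then for every integer n ≥ 0 and every j with 1 ≤ j ≤ 4·5^n, setting k = 5^{n+1} + j, one has a_k = a_{4·5^n + k} = a_{8·5^n + k} = a_{12·5^n + k} = a_{16·5^n + k}. -/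
lemma st_summable : Summable (fun m : ℕ => 1 / ((5:ℝ) ^ (m+1) * 3 ^ (5 ^ (m+1)))) := by
  apply Summable.of_nonneg_of_le (fun m => by positivity) (fun m => ?_)
    (summable_geometric_of_lt_one (r := (1/3:ℝ)) (by norm_num) (by norm_num))
  simp only [one_div, inv_pow]
  apply inv_anti₀ (by positivity)
  calc (3:ℝ)^m ≤ 3^(5^(m+1)) := by
        apply pow_le_pow_right₀ (by norm_num)
        calc m ≤ 5^m := (Nat.lt_pow_self (by norm_num)).le
        _ ≤ 5^(m+1) := Nat.pow_le_pow_right (by norm_num) (Nat.le_succ m)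
  _ ≤ 5^(m+1) * 3^(5^(m+1)) := by nlinarith [pow_pos (by norm_num : (0:ℝ) < 3) (5^(m+1)), one_le_pow₀ (by norm_num : (1:ℝ) ≤ 5) (n := m+1)]

/-- the integer `A = ∑_{m=0}^{n} 5^{n-m} 3^{5^{n+1}-5^{m+1}}`. -/
def Acoef (n : ℕ) : ℕ := ∑ m ∈ Finset.range (n+1), 5^(n-m) * 3^(5^(n+1) - 5^(m+1))

lemma st_mul_pow (n k : ℕ) (hk : 5^(n+1) ≤ k) :
    stoneham 3 5 * 3 ^ k =
      ((3^(k - 5^(n+1)) * Acoef n : ℕ) : ℝ) / (5^(n+1) : ℕ) +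
      ∑' i : ℕ, (3:ℝ)^k / (5 ^ (i+n+2) * 3 ^ (5 ^ (i+n+2))) := by
  have hsplit : stoneham 3 5 * 3 ^ k = ∑' m : ℕ, (3:ℝ)^k / (5 ^ (m+1) * 3 ^ (5 ^ (m+1))) := by
    rw [stoneham, ← tsum_mul_right]
    push_cast
    congr 1 with m
    rw [one_div, inv_mul_eq_div]
  have hf : Summable (fun m : ℕ => (3:ℝ)^k / (5 ^ (m+1) * 3 ^ (5 ^ (m+1)))) :=
    (st_summable.mul_right ((3:ℝ)^k)).congr (fun m => by rw [one_div, inv_mul_eq_div])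
  rw [hsplit, ← Summable.sum_add_tsum_nat_add (n+1) hf]
  congr 1
  · -- finite part
    rw [Acoef]
    push_cast
    rw [Finset.mul_sum, Finset.sum_div]
    refine Finset.sum_congr rfl (fun m hm => ?_)
    have hm' : m ≤ n := Nat.lt_succ_iff.mp (Finset.mem_range.mp hm)
    have h5 : 5^(m+1) ≤ 5^(n+1) := Nat.pow_le_pow_right (by norm_num) (by omega)
    have e3 : (3:ℝ)^k = 3^(k-5^(n+1)) * 3^(5^(n+1)-5^(m+1)) * 3^(5^(m+1)) := by
      rw [← pow_add, ← pow_add]; congr 1; omega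
    have e5 : (5:ℝ)^(n+1) = 5^(n-m) * 5^(m+1) := by
      rw [← pow_add]; congr 1; omega
    rw [e3, e5]
    have p1 : (0:ℝ) < 5^(m+1) := by positivity
    have p2 : (0:ℝ) < 3^(5^(m+1)) := by positivity
    have p3 : (0:ℝ) < (5:ℝ)^(n-m) := by positivity
    field_simp

lemma tail_nonneg (n k : ℕ) :
    0 ≤ ∑' i : ℕ, (3:ℝ)^k / (5 ^ (i+n+2) * 3 ^ (5 ^ (i+n+2))) :=
  tsum_nonneg (fun i => by positivity)

lemma tail_le (n k : ℕ) (hk : k ≤ 5^(n+2)) :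
    ∑' i : ℕ, (3:ℝ)^k / (5 ^ (i+n+2) * 3 ^ (5 ^ (i+n+2))) ≤ 3 / (2 * 5^(n+2)) := by
  have hsum : Summable (fun i : ℕ => (3:ℝ)^k / (5 ^ (i+n+2) * 3 ^ (5 ^ (i+n+2)))) := by
    have := ((summable_nat_add_iff (f := fun m : ℕ => 1 / ((5:ℝ) ^ (m+1) * 3 ^ (5 ^ (m+1)))) (n+1)).2 st_summable).mul_right ((3:ℝ)^k)
    refine this.congr (fun i => ?_)
    rw [one_div, inv_mul_eq_div]
    congr 2 <;> · congr 1; omega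
  have hgeom : Summable (fun i : ℕ => (1/(5:ℝ)^(n+2)) * (1/3)^i) :=
    (summable_geometric_of_lt_one (by norm_num) (by norm_num)).mul_left _
  calc ∑' i : ℕ, (3:ℝ)^k / (5 ^ (i+n+2) * 3 ^ (5 ^ (i+n+2)))
      ≤ ∑' i : ℕ, (1/(5:ℝ)^(n+2)) * (1/3)^i := by
        refine Summable.tsum_le_tsum (fun i => ?_) hsum hgeom
        rw [div_le_iff₀ (by positivity)]
        have h1 : (5:ℝ)^(n+2) ≤ 5^(i+n+2) := by
          apply pow_le_pow_right₀ (by norm_num); omega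
        have h2 : (3:ℝ)^(k+i) ≤ 3^(5^(i+n+2)) := by
          apply pow_le_pow_right₀ (by norm_num)
          have hi : i < 5^i := Nat.lt_pow_self (by norm_num)
          have : i + 1 ≤ 5^i := hi
          calc k + i ≤ 5^(n+2) + i := by omega
          _ ≤ 5^(n+2) * 5^i := by nlinarith [Nat.one_le_two_pow (n := n+2), Nat.pow_pos (n := n+2) (show 0 < 5 by norm_num)]
          _ = 5^(i+n+2) := by rw [← pow_add]; congr 1; omega
        have h3 : (0:ℝ) < 3^i := by positivity
        have h4 : (0:ℝ) < 3^k := by positivity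
        rw [pow_add] at h2
        calc (3:ℝ)^k ≤ 3^(5^(i+n+2)) / 3^i := by rw [le_div_iff₀ h3]; linarith
        _ ≤ 5 ^ (i+n+2) * 3 ^ 5 ^ (i+n+2) * (1 / 5 ^ (n+2) * (1 / 3) ^ i) := by
            rw [one_div, one_div, inv_pow, div_eq_mul_inv]
            have : (0:ℝ) < 3^(5^(i+n+2)) := by positivity
            have h5 : (1:ℝ) ≤ 5^(i+n+2) / 5^(n+2) := by rw [le_div_iff₀ (by positivity)]; linarith
            calc (3:ℝ)^(5^(i+n+2)) * (3^i)⁻¹ = 3^(5^(i+n+2)) * (3^i)⁻¹ * 1 := by ring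
            _ ≤ 3^(5^(i+n+2)) * (3^i)⁻¹ * (5^(i+n+2) / 5^(n+2)) := by
                apply mul_le_mul_of_nonneg_left h5; positivity
            _ = 5 ^ (i+n+2) * 3 ^ 5 ^ (i+n+2) * ((5^(n+2))⁻¹ * (3^i)⁻¹) := by ring
        _ = 1 / 5 ^ (n+2) * (1 / 3) ^ i * (5 ^ (i+n+2) * 3 ^ 5 ^ (i+n+2)) := by
            rw [one_div, one_div, inv_pow]; ring
  _ = (1/(5:ℝ)^(n+2)) * (1-1/3)⁻¹ := by
        rw [tsum_mul_left, tsum_geometric_of_lt_one (by norm_num) (by norm_num)]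
  _ = 3 / (2 * 5^(n+2)) := by
        rw [one_div]; ring_nf

lemma floor_st (n k : ℕ) (h1 : 5^(n+1) ≤ k) (h2 : k ≤ 5^(n+2)) :
    ⌊stoneham 3 5 * 3 ^ k⌋ = ((3^(k - 5^(n+1)) * Acoef n) / 5^(n+1) : ℕ) := by
  rw [st_mul_pow n k h1]
  set X := 3^(k - 5^(n+1)) * Acoef n with hX
  set M := 5^(n+1) with hM
  have hMpos : 0 < M := Nat.pow_pos (by norm_num)
  have hMR : (0:ℝ) < (M:ℝ) := by exact_mod_cast hMpos
  set ε := ∑' i : ℕ, (3:ℝ)^k / (5 ^ (i+n+2) * 3 ^ (5 ^ (i+n+2))) with hε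
  have hε0 : 0 ≤ ε := tail_nonneg n k
  have hε1 : ε ≤ 3 / (2 * 5^(n+2)) := tail_le n k h2
  have hdm : M * (X / M) + X % M = X := Nat.div_add_mod X M
  have hmod : X % M < M := Nat.mod_lt _ hMpos
  have hXR : ((X:ℕ):ℝ) = (M:ℝ) * ((X/M : ℕ):ℝ) + ((X % M : ℕ):ℝ) := by exact_mod_cast hdm.symm
  have hsplitR : ((X:ℕ):ℝ) / (M:ℝ) = ((X/M : ℕ):ℝ) + ((X % M : ℕ):ℝ) / M := by
    rw [hXR, add_div, mul_comm, mul_div_assoc, div_self hMR.ne', mul_one]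
  have h3 : ((X % M : ℕ):ℝ) ≤ (M:ℝ) - 1 := by
    have hle : (X % M : ℕ) ≤ M - 1 := by omega
    calc ((X % M : ℕ):ℝ) ≤ ((M - 1 : ℕ):ℝ) := by exact_mod_cast hle
    _ = (M:ℝ) - 1 := by rw [Nat.cast_sub hMpos]; norm_num
  have hnn : (0:ℝ) ≤ ((X % M : ℕ):ℝ) := by positivity
  have h52 : ((5:ℝ))^(n+2) = 5 * M := by rw [hM]; push_cast; ring
  rw [h52] at hε1
  have hεM : ε < 1 / M := by
    have : 3 / (2 * (5 * (M:ℝ))) < 1 / M := by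
      rw [div_lt_div_iff₀ (by positivity) hMR]; nlinarith
    linarith
  rw [Int.floor_eq_iff]
  constructor
  · rw [Int.cast_natCast, hsplitR]
    have : 0 ≤ ((X % M : ℕ):ℝ) / M := by positivity
    linarith
  · rw [Int.cast_natCast, hsplitR]
    have hd : ((X % M : ℕ):ℝ) / M ≤ ((M:ℝ) - 1) / M := by gcongr
    have he : ((M:ℝ) - 1) / M = 1 - 1/M := by field_simp
    rw [he] at hd
    linarith

lemma ord_dvd (n : ℕ) : (5:ℤ)^(n+1) ∣ 3^(4*5^n) - 1 := by
  induction n with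
  | zero => norm_num
  | succ n ih =>
    obtain ⟨t, ht⟩ : (5:ℤ) ∣ 3^(4*5^n) - 1 :=
      dvd_trans (dvd_pow_self 5 (Nat.succ_ne_zero n)) ih
    set x : ℤ := 3^(4*5^n) with hx
    have hpow : (3:ℤ)^(4*5^(n+1)) = x^5 := by
      rw [hx, ← pow_mul]; congr 1; ring
    have hfac : (3:ℤ)^(4*5^(n+1)) - 1 = (x - 1) * (x^4 + x^3 + x^2 + x + 1) := by
      rw [hpow]; ring
    have hxt : x = 5*t + 1 := by linarith
    have h5 : (5:ℤ) ∣ (x^4 + x^3 + x^2 + x + 1) := by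
      refine ⟨125*t^4 + 125*t^3 + 50*t^2 + 10*t + 1, ?_⟩
      rw [hxt]; ring
    rw [hfac, pow_succ]
    exact mul_dvd_mul ih h5

lemma ord_modeq (n : ℕ) : 1 ≡ 3^(4*5^n) [MOD 5^(n+1)] := by
  rw [Nat.modEq_iff_dvd]
  push_cast
  exact ord_dvd n

lemma digit_st (n k : ℕ) (h1 : 5^(n+1) ≤ k) (h2 : k ≤ 5^(n+2)) :
    digit 3 (stoneham 3 5) k = (3^(k - 5^(n+1)) * Acoef n) / 5^(n+1) % 3 := by
  rw [digit]
  push_cast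
  rw [floor_st n k h1 h2]
  omega

lemma digit_shift (n e : ℕ) (he : 1 ≤ e) :
    (3^e * Acoef n) / 5^(n+1) % 3 = (3^(e + 4*5^n) * Acoef n) / 5^(n+1) % 3 := by
  rw [← Nat.mod_mul_right_div_self, ← Nat.mod_mul_right_div_self]
  congr 1
  have h0 := (ord_modeq n).mul_right (Acoef n)
  rw [one_mul] at h0
  have h1 : 3^(e-1) * Acoef n ≡ 3^(e-1) * (3^(4*5^n) * Acoef n) [MOD 5^(n+1)] :=
    Nat.ModEq.mul_left _ h0
  have h2 := h1.mul_left' (c := 3)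
  have e1 : 3 * (3^(e-1) * Acoef n) = 3^e * Acoef n := by
    rw [← mul_assoc, ← pow_succ']; congr 2; omega
  have e2 : 3 * (3^(e-1) * (3^(4*5^n) * Acoef n)) = 3^(e + 4*5^n) * Acoef n := by
    rw [← mul_assoc, ← mul_assoc, ← pow_succ', ← pow_add]; congr 2; omega
  rw [e1, e2, mul_comm 3 (5^(n+1))] at h2
  exact h2

theorem stmt3 (n : ℕ) (j : ℕ) (hj1 : 1 ≤ j) (hj2 : j ≤ 4 * 5 ^ n) :
    digit 3 (stoneham 3 5) (5 ^ (n + 1) + j) =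
      digit 3 (stoneham 3 5) (4 * 5 ^ n + (5 ^ (n + 1) + j)) ∧
    digit 3 (stoneham 3 5) (5 ^ (n + 1) + j) =
      digit 3 (stoneham 3 5) (8 * 5 ^ n + (5 ^ (n + 1) + j)) ∧
    digit 3 (stoneham 3 5) (5 ^ (n + 1) + j) =
      digit 3 (stoneham 3 5) (12 * 5 ^ n + (5 ^ (n + 1) + j)) ∧
    digit 3 (stoneham 3 5) (5 ^ (n + 1) + j) =
      digit 3 (stoneham 3 5) (16 * 5 ^ n + (5 ^ (n + 1) + j)) := by
  have h5n : 0 < 5^n := Nat.pow_pos (by norm_num)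
  have e5 : 5^(n+1) = 5*5^n := by rw [pow_succ]; ring
  have e52 : 5^(n+2) = 25*5^n := by rw [pow_succ, pow_succ]; ring
  have d0 := digit_st n (5^(n+1)+j) (by omega) (by omega)
  rw [show 5^(n+1)+j - 5^(n+1) = j from by omega] at d0
  have d1 := digit_st n (4*5^n + (5^(n+1)+j)) (by omega) (by omega)
  rw [show 4*5^n + (5^(n+1)+j) - 5^(n+1) = j + 4*5^n from by omega] at d1
  have d2 := digit_st n (8*5^n + (5^(n+1)+j)) (by omega) (by omega)
  rw [show 8*5^n + (5^(n+1)+j) - 5^(n+1) = (j + 4*5^n) + 4*5^n from by omega] at d2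
  have d3 := digit_st n (12*5^n + (5^(n+1)+j)) (by omega) (by omega)
  rw [show 12*5^n + (5^(n+1)+j) - 5^(n+1) = ((j + 4*5^n) + 4*5^n) + 4*5^n from by omega] at d3
  have d4 := digit_st n (16*5^n + (5^(n+1)+j)) (by omega) (by omega)
  rw [show 16*5^n + (5^(n+1)+j) - 5^(n+1) = (((j + 4*5^n) + 4*5^n) + 4*5^n) + 4*5^n from by omega] at d4
  have s1 := digit_shift n j hj1
  have s2 := digit_shift n (j + 4*5^n) (by omega)
  have s3 := digit_shift n ((j + 4*5^n) + 4*5^n) (by omega)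
  have s4 := digit_shift n (((j + 4*5^n) + 4*5^n) + 4*5^n) (by omega)
  refine ⟨?_, ?_, ?_, ?_⟩
  · rw [d0, d1, s1]
  · rw [d0, d2, s1, s2]
  · rw [d0, d3, s1, s2, s3]
  · rw [d0, d4, s1, s2, s3, s4]
end

section
/- Let p be an odd prime, m ≥ 1 an integer, b ≥ 2 an integer that is a primitive root modulo p², and a an integer with 1 ≤ a < p^m and gcd(a,p) = 1. Let n = φ(p^m). Then the base-b digit sequence of a/p^m is a cyclic shift of that of 1/p^m: there exists an integer s with 0 ≤ s < n such that for every i ≥ 1, digit_b(a/p^m, i) = digit_b(1/p^m, ((i − 1 + s) mod n) + 1). -/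
private lemma floor_real_div (u : ℤ) (d : ℕ) : ⌊(u : ℝ) / (d : ℝ)⌋ = u / (d : ℤ) := by
  have h := Rat.floor_cast (α := ℝ) ((u : ℚ) / (d : ℚ))
  rw [Rat.floor_intCast_div_natCast] at h
  rw [← h]
  congr 1
  push_cast
  ring

private lemma digit_eq_aux (b c d k : ℕ) :
    digit b ((c : ℝ) / (d : ℝ)) k = ((c * b ^ k : ℤ) / (d : ℤ) % (b : ℤ)).toNat := by
  unfold digit
  have h : (c : ℝ) / (d : ℝ) * (b : ℝ) ^ k = ((c * b ^ k : ℤ) : ℝ) / (d : ℝ) := by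
    push_cast; ring
  rw [h, floor_real_div]

private lemma mod_div_eq {N b x y : ℤ} (hN : N ≠ 0) (h : b * N ∣ x - y) :
    x / N % b = y / N % b := by
  obtain ⟨t, ht⟩ := h
  have hx : x = y + b * t * N := by linear_combination ht
  rw [hx, Int.add_mul_ediv_right _ _ hN, Int.add_mul_emod_self_left]

private lemma pow_eq_one_iff_dvd (b M t : ℕ) [NeZero M] :
    ((b : ZMod M) ^ t = 1) ↔ (M : ℤ) ∣ (b : ℤ) ^ t - 1 := by
  rw [← ZMod.intCast_zmod_eq_zero_iff_dvd]
  push_cast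
  rw [sub_eq_zero]

section NT
variable (p b : ℕ) (hp : p.Prime) (hpodd : Odd p)
  (hroot : orderOf (b : ZMod (p ^ 2)) = Nat.totient (p ^ 2))

include hp hroot in
private lemma coprime_of_root : b.Coprime p := by
  haveI : NeZero (p ^ 2) := ⟨pow_ne_zero _ hp.ne_zero⟩
  have h1 : IsUnit (b : ZMod (p ^ 2)) := by
    refine IsUnit.of_pow_eq_one (pow_orderOf_eq_one _) ?_
    rw [hroot]
    exact (Nat.totient_pos.mpr (pow_pos hp.pos 2)).ne'
  have h2 := (ZMod.isUnit_iff_coprime b (p ^ 2)).mp h1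
  exact (Nat.coprime_pow_right_iff (by norm_num) _ _).mp h2

include hp hroot in
private lemma fermat_dvd : (p : ℤ) ∣ (b : ℤ) ^ (p - 1) - 1 := by
  haveI : Fact p.Prime := ⟨hp⟩
  have hbp := coprime_of_root p b hp hroot
  have hb0 : (b : ZMod p) ≠ 0 := ((ZMod.isUnit_iff_coprime b p).mpr hbp).ne_zero
  exact (pow_eq_one_iff_dvd b p (p - 1)).mp (ZMod.pow_card_sub_one_eq_one hb0)

include hp hroot in
private lemma not_sq_dvd : ¬ (p : ℤ) ^ 2 ∣ (b : ℤ) ^ (p - 1) - 1 := by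
  haveI : NeZero (p ^ 2) := ⟨pow_ne_zero _ hp.ne_zero⟩
  intro h
  have h1 : ((b : ZMod (p ^ 2)) ^ (p - 1) = 1) := by
    rw [pow_eq_one_iff_dvd]
    push_cast
    exact h
  have h2 : orderOf (b : ZMod (p ^ 2)) ∣ p - 1 := orderOf_dvd_of_pow_eq_one h1
  rw [hroot, Nat.totient_prime_pow hp (by norm_num)] at h2
  have hp1 : 1 ≤ p - 1 := Nat.one_le_iff_ne_zero.mpr (Nat.sub_ne_zero_of_lt hp.one_lt)
  have h3 := Nat.le_of_dvd (by omega) h2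
  have h4 := hp.two_le
  have h3' : p * (p - 1) ≤ p - 1 := by norm_num at h3; exact h3
  nlinarith

include hp hpodd hroot in
private lemma emult_eq (i : ℕ) :
    emultiplicity ((p : ℤ)) ((b : ℤ) ^ ((p - 1) * p ^ i) - 1) = 1 + i := by
  have hbp := coprime_of_root p b hp hroot
  have hx : ¬ (p : ℤ) ∣ (b : ℤ) ^ (p - 1) := by
    intro h
    have h2 := (Nat.prime_iff_prime_int.mp hp).dvd_of_dvd_pow h
    rw [Int.natCast_dvd_natCast] at h2
    exact (hp.coprime_iff_not_dvd.mp hbp.symm) h2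
  have hxy := fermat_dvd p b hp hroot
  have h1 : (b : ℤ) ^ ((p - 1) * p ^ i) - 1 = ((b : ℤ) ^ (p - 1)) ^ (p ^ i) - 1 ^ (p ^ i) := by
    rw [← pow_mul, one_pow]
  rw [h1, Int.emultiplicity_pow_sub_pow hp hpodd hxy hx (p ^ i)]
  have e1 : emultiplicity ((p : ℤ)) ((b : ℤ) ^ (p - 1) - 1) = 1 :=
    emultiplicity_eq_of_dvd_of_not_dvd (by simpa using hxy)
      (by simpa using not_sq_dvd p b hp hroot)
  have e2 : emultiplicity p (p ^ i) = i := emultiplicity_pow_self_of_prime hp.prime i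
  rw [e1, e2]

include hp hroot in
private lemma orderOf_mod_p : orderOf (b : ZMod p) = p - 1 := by
  haveI : Fact p.Prime := ⟨hp⟩
  haveI : NeZero (p ^ 2) := ⟨pow_ne_zero _ hp.ne_zero⟩
  have hbp := coprime_of_root p b hp hroot
  have hb0 : (b : ZMod p) ≠ 0 := ((ZMod.isUnit_iff_coprime b p).mpr hbp).ne_zero
  set d := orderOf (b : ZMod p) with hd
  have hdvd : d ∣ p - 1 := orderOf_dvd_of_pow_eq_one (ZMod.pow_card_sub_one_eq_one hb0)
  have h1 : (p : ℤ) ∣ (b : ℤ) ^ d - 1 := (pow_eq_one_iff_dvd b p d).mp (pow_orderOf_eq_one _)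
  have h2 : (p : ℤ) ∣ ∑ i ∈ Finset.range p, ((b : ℤ) ^ d) ^ i * 1 ^ (p - 1 - i) :=
    dvd_geom_sum₂_self (by simpa using h1)
  have h3 : (p : ℤ) * p ∣
      (∑ i ∈ Finset.range p, ((b : ℤ) ^ d) ^ i * 1 ^ (p - 1 - i)) * ((b : ℤ) ^ d - 1) :=
    mul_dvd_mul h2 h1
  rw [geom_sum₂_mul] at h3
  have h4 : ((b : ZMod (p ^ 2)) ^ (d * p) = 1) := by
    rw [pow_eq_one_iff_dvd]
    push_cast
    rw [pow_mul]
    simpa [sq] using h3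
  have h5 : p * (p - 1) ∣ d * p := by
    have h6 := orderOf_dvd_of_pow_eq_one h4
    rwa [hroot, Nat.totient_prime_pow hp (by norm_num), pow_one] at h6
  have h6 : p - 1 ∣ d := by
    have h7 : p * (p - 1) ∣ p * d := by rwa [mul_comm d p] at h5
    exact (mul_dvd_mul_iff_left hp.pos.ne').mp h7
  exact Nat.dvd_antisymm hdvd h6

include hp hpodd hroot in
private lemma orderOf_mod_pm (m : ℕ) (hm : 1 ≤ m) :
    orderOf (b : ZMod (p ^ m)) = Nat.totient (p ^ m) := by
  haveI : NeZero (p ^ m) := ⟨pow_ne_zero _ hp.ne_zero⟩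
  haveI : Fact p.Prime := ⟨hp⟩
  have hbp := coprime_of_root p b hp hroot
  set T := orderOf (b : ZMod (p ^ m)) with hT
  have hunit : IsUnit (b : ZMod (p ^ m)) :=
    (ZMod.isUnit_iff_coprime b (p ^ m)).mpr ((Nat.coprime_pow_right_iff (by omega) _ _).mpr hbp)
  have hTdvd : T ∣ Nat.totient (p ^ m) := by
    have h1 : orderOf hunit.unit = T := by rw [← orderOf_units, hunit.unit_spec]
    rw [← ZMod.card_units_eq_totient, ← h1]
    exact orderOf_dvd_card
  have hdvdT : ((p : ℤ)) ^ m ∣ (b : ℤ) ^ T - 1 := by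
    have h2 := (pow_eq_one_iff_dvd b (p ^ m) T).mp (pow_orderOf_eq_one _)
    exact_mod_cast h2
  have hmod : (b : ZMod p) ^ T = 1 := by
    rw [pow_eq_one_iff_dvd]
    exact dvd_trans (dvd_pow_self (p : ℤ) (by omega : m ≠ 0)) hdvdT
  have hp1T : (p - 1) ∣ T := by
    rw [← orderOf_mod_p p b hp hroot]
    exact orderOf_dvd_of_pow_eq_one hmod
  obtain ⟨v, hv⟩ := hp1T
  have hvdvd : v ∣ p ^ (m - 1) := by
    have h2 : (p - 1) * v ∣ (p - 1) * p ^ (m - 1) := by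
      rw [← hv]
      rw [Nat.totient_prime_pow hp (by omega)] at hTdvd
      rwa [mul_comm] at hTdvd
    exact (mul_dvd_mul_iff_left (by have := hp.two_le; omega : p - 1 ≠ 0)).mp h2
  obtain ⟨i, hile, hieq⟩ := (Nat.dvd_prime_pow hp).mp hvdvd
  have hemult : emultiplicity ((p : ℤ)) ((b : ℤ) ^ T - 1) = 1 + i := by
    rw [hv, hieq]
    exact emult_eq p b hp hpodd hroot i
  have hle : (m : ℕ∞) ≤ 1 + i := hemult ▸ le_emultiplicity_of_pow_dvd hdvdT
  have him : m ≤ 1 + i := by exact_mod_cast hle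
  have hi : i = m - 1 := by omega
  rw [hv, hieq, hi, Nat.totient_prime_pow hp (by omega), mul_comm]

end NT

theorem stmt8 (p m b a : ℕ) (hp : p.Prime) (hpodd : Odd p) (hm : 1 ≤ m)
    (hb : 2 ≤ b)
    (hroot : orderOf (b : ZMod (p ^ 2)) = Nat.totient (p ^ 2))
    (ha1 : 1 ≤ a) (ha2 : a < p ^ m) (hap : Nat.Coprime a p) :
    ∃ s < Nat.totient (p ^ m), ∀ i : ℕ, 1 ≤ i →
      digit b ((a : ℝ) / (p : ℝ) ^ m) i =
        digit b (1 / (p : ℝ) ^ m) ((i - 1 + s) % Nat.totient (p ^ m) + 1) := by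
  haveI : NeZero (p ^ m) := ⟨pow_ne_zero _ hp.ne_zero⟩
  set N := p ^ m with hN
  set n := Nat.totient N with hn
  have hn0 : 0 < n := Nat.totient_pos.mpr (pow_pos hp.pos m)
  have hord : orderOf (b : ZMod N) = n := orderOf_mod_pm p b hp hpodd hroot m hm
  have hbp : b.Coprime p := coprime_of_root p b hp hroot
  have hbunit : IsUnit (b : ZMod N) :=
    (ZMod.isUnit_iff_coprime b N).mpr ((Nat.coprime_pow_right_iff (by omega) _ _).mpr hbp)
  have haunit : IsUnit (a : ZMod N) :=
    (ZMod.isUnit_iff_coprime a N).mpr ((Nat.coprime_pow_right_iff (by omega) _ _).mpr hap)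
  -- the unit group is generated by b
  have hordu : orderOf hbunit.unit = n := by rw [← orderOf_units, hbunit.unit_spec]; exact hord
  have htop : Subgroup.zpowers hbunit.unit = ⊤ := by
    apply Subgroup.eq_top_of_card_eq
    rw [Nat.card_zpowers, hordu, Nat.card_eq_fintype_card, ZMod.card_units_eq_totient]
  obtain ⟨k, hk⟩ : haunit.unit ∈ Submonoid.powers hbunit.unit := by
    rw [mem_powers_iff_mem_zpowers, htop]; trivial
  refine ⟨k % n, Nat.mod_lt _ hn0, ?_⟩
  set s := k % n with hs
  have hus : hbunit.unit ^ s = haunit.unit := by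
    rw [hs, ← hordu, pow_mod_orderOf]; exact hk
  have hsa : ((N : ℕ) : ℤ) ∣ (b : ℤ) ^ s - (a : ℤ) := by
    rw [← ZMod.intCast_zmod_eq_zero_iff_dvd]
    push_cast
    rw [sub_eq_zero]
    have := congrArg (Units.val) hus
    rwa [Units.val_pow_eq_pow_val, hbunit.unit_spec, haunit.unit_spec] at this
  have hbn : ((N : ℕ) : ℤ) ∣ (b : ℤ) ^ n - 1 := by
    refine (pow_eq_one_iff_dvd b N n).mp ?_
    rw [← hord]; exact pow_orderOf_eq_one _
  intro i hi
  set j := (i - 1 + s) % n + 1 with hj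
  set q := (i - 1 + s) / n with hq
  have hkey : s + i = j + n * q := by
    have h0 : n * q + (i - 1 + s) % n = i - 1 + s := by rw [hq]; exact Nat.div_add_mod _ _
    omega
  have hcast : (p : ℝ) ^ m = ((N : ℕ) : ℝ) := by rw [hN]; push_cast; ring
  have hone : (1 : ℝ) = ((1 : ℕ) : ℝ) := by norm_num
  rw [hcast, hone, digit_eq_aux, digit_eq_aux]
  congr 1
  have hN0 : ((N : ℕ) : ℤ) ≠ 0 := Int.natCast_ne_zero.mpr (NeZero.ne N)
  apply mod_div_eq hN0
  have e : (b : ℤ) ^ i * (b : ℤ) ^ s = (b : ℤ) ^ j * ((b : ℤ) ^ n) ^ q := by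
    rw [← pow_add, ← pow_mul, ← pow_add]
    congr 1
    omega
  have hid : (a : ℤ) * (b : ℤ) ^ i - (1 : ℕ) * (b : ℤ) ^ j =
      (b : ℤ) ^ i * ((a : ℤ) - (b : ℤ) ^ s) + (b : ℤ) ^ j * (((b : ℤ) ^ n) ^ q - 1) := by
    push_cast
    linear_combination e
  rw [hid]
  refine dvd_add (mul_dvd_mul ?_ ?_) (mul_dvd_mul ?_ ?_)
  · exact dvd_pow_self (b : ℤ) (by omega)
  · exact dvd_sub_comm.mp hsa
  · exact dvd_pow_self (b : ℤ) (by omega)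
  · exact dvd_trans hbn (by simpa using sub_dvd_pow_sub_pow ((b : ℤ) ^ n) 1 q)
end

section
/- Let m ≥ 1 be an integer, p an odd prime, and b ≥ 2 an integer coprime to p that is a primitive root modulo p and modulo p². Let a be an integer with 1 ≤ a < p^m and gcd(a,p)=1, and let q_i := ⌊(r_{i−1}·b)/p^m⌋ with r_i := a·b^i mod p^m be given by the base-b algorithm for a/p^m. Then the number of indices j with 1 ≤ j ≤ φ(p^m) and q_j = 0 equals ⌊p^m/b⌋ − ⌊p^{m−1}/b⌋. -/
open Finset

private lemma modEq_of_zmod_pow_eq_one {b n d : ℕ} (h : (b : ZMod n) ^ d = 1) :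
    b ^ d ≡ 1 [MOD n] := by
  have : ((b ^ d : ℕ) : ZMod n) = ((1 : ℕ) : ZMod n) := by push_cast; simpa using h
  exact (ZMod.natCast_eq_natCast_iff _ _ _).mp this

private lemma zmod_pow_eq_one_of_modEq {b n d : ℕ} (h : b ^ d ≡ 1 [MOD n]) :
    (b : ZMod n) ^ d = 1 := by
  have : ((b ^ d : ℕ) : ZMod n) = ((1 : ℕ) : ZMod n) :=
    (ZMod.natCast_eq_natCast_iff _ _ _).mpr h
  push_cast at this; simpa using this

private lemma order_lift (p m b : ℕ) (hm : 1 ≤ m) (hp : p.Prime) (hpodd : Odd p)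
    (hb : 2 ≤ b) (hbp : Nat.Coprime b p)
    (hroot1 : orderOf (b : ZMod p) = Nat.totient p)
    (hroot2 : orderOf (b : ZMod (p ^ 2)) = Nat.totient (p ^ 2)) :
    orderOf (b : ZMod (p ^ m)) = Nat.totient (p ^ m) := by
  haveI : Fact p.Prime := ⟨hp⟩
  rcases eq_or_lt_of_le hm with h1 | h2
  · subst h1; rw [pow_one]; exact hroot1
  -- now 2 ≤ m
  have hm2 : 2 ≤ m := h2
  have hp1 : 1 < p := hp.one_lt
  have hbpm : Nat.Coprime b (p ^ m) := hbp.pow_right m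
  set d := orderOf (b : ZMod (p ^ m)) with hd
  -- d divides totient (p^m)
  have hdvd : d ∣ Nat.totient (p ^ m) := by
    apply orderOf_dvd_of_pow_eq_one
    exact zmod_pow_eq_one_of_modEq (Nat.ModEq.pow_totient hbpm)
  have hmain : b ^ d ≡ 1 [MOD p ^ m] :=
    modEq_of_zmod_pow_eq_one (pow_orderOf_eq_one _)
  -- order mod p and mod p^2 divide d
  have hmod1 : b ^ d ≡ 1 [MOD p] :=
    (hmain.of_dvd (dvd_pow_self p (by omega)))
  have hmod2 : b ^ d ≡ 1 [MOD p ^ 2] :=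
    (hmain.of_dvd (pow_dvd_pow p hm2))
  have hd1 : (p - 1) ∣ d := by
    rw [← Nat.totient_prime hp, ← hroot1]
    exact orderOf_dvd_of_pow_eq_one (zmod_pow_eq_one_of_modEq hmod1)
  have hd2 : p * (p - 1) ∣ d := by
    have ht2 : Nat.totient (p ^ 2) = p * (p - 1) := by
      rw [Nat.totient_prime_pow hp (by norm_num)]; ring_nf
    rw [← ht2, ← hroot2]
    exact orderOf_dvd_of_pow_eq_one (zmod_pow_eq_one_of_modEq hmod2)
  -- structure of d : d = (p-1) * p^s
  have htot : Nat.totient (p ^ m) = p ^ (m - 1) * (p - 1) :=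
    Nat.totient_prime_pow hp (by omega)
  have hdpos : 0 < d := by
    have : 0 < Nat.totient (p ^ m) := Nat.totient_pos.mpr (pow_pos hp.pos m)
    exact Nat.pos_of_dvd_of_pos hdvd this
  obtain ⟨e, he⟩ := hd1
  have hed : e ∣ p ^ (m - 1) := by
    have h1 : (p - 1) * e ∣ p ^ (m - 1) * (p - 1) := by rw [← he, ← htot]; exact hdvd
    have hp1pos : 0 < p - 1 := by omega
    rw [mul_comm (p ^ (m - 1))] at h1
    exact (mul_dvd_mul_iff_left hp1pos.ne').mp h1
  obtain ⟨s, hs, hse⟩ := (Nat.dvd_prime_pow hp).mp hed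
  -- compute padic valuation of b^d - 1
  have hbppos : 1 < b ^ (p - 1) := one_lt_pow₀ (by omega) (by omega)
  have hferma : b ^ (p - 1) ≡ 1 [MOD p] := by
    apply modEq_of_zmod_pow_eq_one
    rw [← Nat.totient_prime hp, ← hroot1]
    exact pow_orderOf_eq_one _
  have hpd : p ∣ b ^ (p - 1) - 1 :=
    (Nat.modEq_iff_dvd' (by omega)).mp hferma.symm
  have hnpd : ¬ p ∣ b ^ (p - 1) := fun h =>
    (hp.coprime_iff_not_dvd.mp hbp.symm) (hp.dvd_of_dvd_pow h)
  have hval1 : padicValNat p (b ^ (p - 1) - 1) = 1 := by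
    have hge : 1 ≤ padicValNat p (b ^ (p - 1) - 1) := by
      rw [← padicValNat_dvd_iff_le (by omega), pow_one]; exact hpd
    have hlt : padicValNat p (b ^ (p - 1) - 1) < 2 := by
      by_contra hc
      push_neg at hc
      have : p ^ 2 ∣ b ^ (p - 1) - 1 := by
        rw [padicValNat_dvd_iff_le (by omega)]; exact hc
      have hmodc : b ^ (p - 1) ≡ 1 [MOD p ^ 2] :=
        ((Nat.modEq_iff_dvd' (by omega)).mpr this).symm
      have : orderOf (b : ZMod (p ^ 2)) ∣ p - 1 :=
        orderOf_dvd_of_pow_eq_one (zmod_pow_eq_one_of_modEq hmodc)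
      rw [hroot2, Nat.totient_prime_pow hp (by norm_num)] at this
      have h3 : p ^ (2 - 1) * (p - 1) ≤ p - 1 := Nat.le_of_dvd (by omega) this
      have h4 : p * (p - 1) ≤ p - 1 := by simpa using h3
      nlinarith
    omega
  have hvald : padicValNat p (b ^ d - 1) = 1 + s := by
    have hrw : b ^ d - 1 = (b ^ (p - 1)) ^ (p ^ s) - 1 ^ (p ^ s) := by
      rw [← pow_mul, ← hse, ← he, one_pow]
    rw [hrw, padicValNat.pow_sub_pow hpodd hbppos hpd hnpd (pow_ne_zero _ hp.pos.ne'),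
      hval1, padicValNat.prime_pow]
  have hbd1 : 1 < b ^ d := Nat.one_lt_pow (by omega) (by omega)
  have hmle : m ≤ 1 + s := by
    rw [← hvald]
    rw [← padicValNat_dvd_iff_le (by omega)]
    exact (Nat.modEq_iff_dvd' (Nat.one_le_pow _ _ (by omega))).mp hmain.symm
  -- s ≥ 1 would follow from hd2, but we only need s = m - 1
  have hsm : s = m - 1 := by omega
  rw [htot, he, hse, hsm, mul_comm]

theorem stmt9 (p m b a : ℕ) (hm : 1 ≤ m) (hp : p.Prime) (hpodd : Odd p)
    (hb : 2 ≤ b) (hbp : Nat.Coprime b p)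
    (hroot1 : orderOf (b : ZMod p) = Nat.totient p)
    (hroot2 : orderOf (b : ZMod (p ^ 2)) = Nat.totient (p ^ 2))
    (ha1 : 1 ≤ a) (ha2 : a < p ^ m) (hap : Nat.Coprime a p)
    (q : ℕ → ℕ)
    (hq : ∀ i, 1 ≤ i → q i = (a * b ^ (i - 1) % p ^ m) * b / p ^ m) :
    ((Finset.Icc 1 (Nat.totient (p ^ m))).filter (fun j => q j = 0)).card =
      p ^ m / b - p ^ (m - 1) / b := by
  haveI : Fact p.Prime := ⟨hp⟩
  have hpm1 : 1 < p ^ m := Nat.one_lt_pow (by omega) hp.one_lt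
  haveI : NeZero (p ^ m) := ⟨by positivity⟩
  have hbpm : Nat.Coprime b (p ^ m) := hbp.pow_right m
  have hapm : Nat.Coprime a (p ^ m) := hap.pow_right m
  have horder : orderOf (b : ZMod (p ^ m)) = Nat.totient (p ^ m) :=
    order_lift p m b hm hp hpodd hb hbp hroot1 hroot2
  set φm := Nat.totient (p ^ m) with hφm
  have hφpos : 0 < φm := Nat.totient_pos.mpr (by positivity)
  set N := p ^ m / b with hN
  -- key iff: r * b < p^m ↔ r ≤ N
  have hbnd : ¬ b ∣ p ^ m := fun h => by
    have := Nat.Coprime.eq_one_of_dvd hbpm h; omega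
  have hiff : ∀ r : ℕ, (r * b < p ^ m ↔ r ≤ N) := by
    intro r
    constructor
    · intro h
      exact (Nat.le_div_iff_mul_le (by omega)).mpr h.le
    · intro h
      have h1 : r * b ≤ p ^ m := (Nat.le_div_iff_mul_le (by omega)).mp h
      rcases lt_or_eq_of_le h1 with h2 | h2
      · exact h2
      · exact absurd (h2 ▸ dvd_mul_left b r) hbnd
  -- units
  set bu : (ZMod (p ^ m))ˣ := ZMod.unitOfCoprime b hbpm with hbu
  set au : (ZMod (p ^ m))ˣ := ZMod.unitOfCoprime a hapm with hau
  have hbuc : (bu : ZMod (p ^ m)) = (b : ZMod (p ^ m)) := ZMod.coe_unitOfCoprime b hbpm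
  have hauc : (au : ZMod (p ^ m)) = (a : ZMod (p ^ m)) := ZMod.coe_unitOfCoprime a hapm
  have hbuord : orderOf bu = φm := by
    rw [← orderOf_units, hbuc, horder]
  have hcard : Fintype.card (ZMod (p ^ m))ˣ = φm := ZMod.card_units_eq_totient _
  -- the value map
  have hdvdp : p ∣ p ^ m := dvd_pow_self p (by omega)
  have hval_mem : ∀ j : ℕ, ¬ p ∣ a * b ^ (j - 1) % p ^ m := by
    intro j hdvd
    have h1 : p ∣ a * b ^ (j - 1) := (Nat.dvd_mod_iff hdvdp).mp hdvd
    rcases hp.dvd_mul.mp h1 with h2 | h2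
    · exact (hp.coprime_iff_not_dvd.mp hap.symm) h2
    · exact (hp.coprime_iff_not_dvd.mp hbp.symm) (hp.dvd_of_dvd_pow h2)
  -- q j = 0 ↔ value ≤ N (for 1 ≤ j)
  have hq0 : ∀ j : ℕ, 1 ≤ j → (q j = 0 ↔ a * b ^ (j - 1) % p ^ m ≤ N) := by
    intro j hj
    rw [hq j hj, Nat.div_eq_zero_iff_lt (by positivity)]
    exact hiff _
  rw [show p ^ (m - 1) / b = N / p by
    have hpm : p ^ m = p ^ (m - 1) * p := by rw [← pow_succ]; congr 1; omega
    rw [hN, Nat.div_div_eq_div_mul, mul_comm b p, ← Nat.div_div_eq_div_mul, hpm,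
      Nat.mul_div_cancel _ hp.pos]]
  rw [show N - N / p = ((Finset.Ioc 0 N).filter (fun r => ¬ p ∣ r)).card by
    have h1 := Finset.card_filter_add_card_filter_not
      (s := Finset.Ioc 0 N) (p := fun r => p ∣ r)
    rw [Nat.Ioc_filter_dvd_card_eq_div, Nat.card_Ioc] at h1
    simp only [Nat.sub_zero] at h1
    omega]
  apply Finset.card_bij (fun j _ => a * b ^ (j - 1) % p ^ m)
  · -- maps into target
    intro j hj
    simp only [Finset.mem_filter, Finset.mem_Icc] at hj
    obtain ⟨⟨hj1, hj2⟩, hjq⟩ := hj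
    simp only [Finset.mem_filter, Finset.mem_Ioc]
    refine ⟨⟨?_, (hq0 j hj1).mp hjq⟩, hval_mem j⟩
    exact Nat.pos_of_ne_zero (fun h => hval_mem j (h ▸ dvd_zero p))
  · -- injective
    intro j₁ hj₁ j₂ hj₂ heq
    simp only [Finset.mem_filter, Finset.mem_Icc] at hj₁ hj₂
    have hmeq : a * b ^ (j₁ - 1) ≡ a * b ^ (j₂ - 1) [MOD p ^ m] := heq
    have hz : (a : ZMod (p ^ m)) * (b : ZMod (p ^ m)) ^ (j₁ - 1)
        = (a : ZMod (p ^ m)) * (b : ZMod (p ^ m)) ^ (j₂ - 1) := by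
      have := (ZMod.natCast_eq_natCast_iff _ _ _).mpr hmeq
      push_cast at this
      exact this
    have hu : au * bu ^ (j₁ - 1) = au * bu ^ (j₂ - 1) := by
      apply Units.ext
      push_cast [hauc, hbuc]
      exact hz
    have hpow : bu ^ (j₁ - 1) = bu ^ (j₂ - 1) := mul_left_cancel hu
    have := pow_eq_pow_iff_modEq.mp hpow
    rw [hbuord] at this
    have := Nat.ModEq.eq_of_lt_of_lt this (by omega) (by omega)
    omega
  · -- surjective
    intro r hr
    simp only [Finset.mem_filter, Finset.mem_Ioc] at hr
    obtain ⟨⟨hr0, hrN⟩, hrp⟩ := hr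
    have hrpm : Nat.Coprime r (p ^ m) :=
      (hp.coprime_iff_not_dvd.mpr hrp).symm.pow_right m
    set ru : (ZMod (p ^ m))ˣ := ZMod.unitOfCoprime r hrpm with hru
    have hruc : (ru : ZMod (p ^ m)) = (r : ZMod (p ^ m)) := ZMod.coe_unitOfCoprime r hrpm
    have htop : Subgroup.zpowers bu = ⊤ := by
      apply Subgroup.eq_top_of_card_eq
      rw [Nat.card_zpowers, hbuord, Nat.card_eq_fintype_card, hcard]
    have hmem : au⁻¹ * ru ∈ Subgroup.zpowers bu := by rw [htop]; trivial
    rw [← mem_powers_iff_mem_zpowers] at hmem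
    obtain ⟨n, hn⟩ := hmem
    have hn' : bu ^ n = au⁻¹ * ru := hn
    have hpowmod : bu ^ (n % φm) = bu ^ n := by
      rw [← hbuord]; exact pow_mod_orderOf bu n
    have huval : au * bu ^ (n % φm) = ru := by
      rw [hpowmod, hn', mul_inv_cancel_left]
    have hz : (a : ZMod (p ^ m)) * (b : ZMod (p ^ m)) ^ (n % φm) = (r : ZMod (p ^ m)) := by
      rw [← hauc, ← hbuc, ← hruc, ← Units.val_pow_eq_pow_val, ← Units.val_mul, huval]
    have hmeq : a * b ^ (n % φm) ≡ r [MOD p ^ m] := by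
      apply (ZMod.natCast_eq_natCast_iff _ _ _).mp
      push_cast
      exact hz
    have hrlt : r < p ^ m := lt_of_le_of_lt hrN (Nat.div_lt_self (by positivity) (by omega))
    have hvalue : a * b ^ (n % φm) % p ^ m = r := by
      have := hmeq
      unfold Nat.ModEq at this
      rw [this, Nat.mod_eq_of_lt hrlt]
    have hjmem : n % φm < φm := Nat.mod_lt _ hφpos
    refine ⟨n % φm + 1, ?_, ?_⟩
    · simp only [Finset.mem_filter, Finset.mem_Icc]
      refine ⟨⟨by omega, by omega⟩, ?_⟩
      rw [hq0 _ (by omega)]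
      simpa [hvalue] using hrN
    · simpa using hvalue
end

section
/- Let m ≥ 1 be an integer, p an odd prime, and b ≥ 2 an integer coprime to p that is a primitive root modulo p and modulo p². Let a be an integer with 1 ≤ a < p^m and gcd(a,p)=1, and let q_i be the digits given by the base-b algorithm for a/p^m. Then the sequence (q_i)_{i≥1} is periodic with period φ(p^m) (that is, q_{i+φ(p^m)} = q_i for all i ≥ 1), and φ(p^m) is the minimal period: for every t with 0 < t < φ(p^m) there exists i ≥ 1 with q_{i+t} ≠ q_i. -/
lemma stmt10_key (p : ℕ) (hp : p.Prime) (h3p : 3 ≤ p) (k : ℕ) (hk : 1 ≤ k) (c : ℤ) :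
    ∃ d : ℤ, (1 + c * (p:ℤ)^k)^p = 1 + (c + d * p) * (p:ℤ)^(k+1) := by
  have hdvd : ((p:ℤ))^(k+2) ∣ (1 + c * (p:ℤ)^k)^p - 1 - c * (p:ℤ)^(k+1) := by
    obtain ⟨P, hP⟩ : ∃ P, p = P + 1 + 1 := ⟨p - 2, by omega⟩
    subst hP
    have hexp := add_pow (c * ((P+1+1 : ℕ):ℤ)^k) 1 (P+1+1)
    rw [Finset.sum_range_succ', Finset.sum_range_succ'] at hexp
    have h1 : (1 + c * ((P+1+1:ℕ):ℤ)^k)^(P+1+1) - 1 - c * ((P+1+1:ℕ):ℤ)^(k+1)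
        = ∑ i ∈ Finset.range (P+1),
            (c * ((P+1+1:ℕ):ℤ)^k)^(i+1+1) * ((P+1+1).choose (i+1+1) : ℤ) := by
      rw [add_comm (1 : ℤ), hexp]
      simp only [one_pow, mul_one, pow_zero, one_mul, zero_add, Nat.choose_zero_right, Nat.cast_one,
        Nat.choose_one_right, pow_one]
      push_cast
      ring
    rw [h1]
    apply Finset.dvd_sum
    intro i _
    rcases Nat.eq_zero_or_pos i with rfl | hi
    · obtain ⟨t, ht⟩ := hp.dvd_choose_self (k := 2) (by omega) (by omega)
      have ht' : ((P+1+1).choose 2 : ℤ) = ((P+1+1 : ℕ):ℤ) * t := by exact_mod_cast ht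
      have h2 : (c * ((P+1+1:ℕ):ℤ)^k)^(0+1+1) * (((P+1+1).choose (0+1+1)) : ℤ)
          = (c^2 * t) * ((P+1+1:ℕ):ℤ)^(k+k+1) := by
        simp only [zero_add] at ht' ⊢
        norm_num at ht' ⊢
        rw [ht']
        ring
      rw [h2]
      exact Dvd.dvd.mul_left (pow_dvd_pow _ (by omega)) _
    · have h2 : (c * ((P+1+1:ℕ):ℤ)^k)^(i+1+1) * (((P+1+1).choose (i+1+1)) : ℤ)
          = (c^(i+1+1) * (((P+1+1).choose (i+1+1)) : ℤ)) * ((P+1+1:ℕ):ℤ)^(k*(i+1+1)) := by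
        rw [mul_pow, ← pow_mul]
        ring
      rw [h2]
      refine Dvd.dvd.mul_left (pow_dvd_pow _ ?_) _
      nlinarith
  obtain ⟨e, he⟩ := hdvd
  refine ⟨e, ?_⟩
  have h3 : (p:ℤ)^(k+2) = (p:ℤ)^(k+1) * p := by ring
  linear_combination he + e * h3
lemma stmt10_tot (p : ℕ) (hp : p.Prime) (k : ℕ) (hk : 1 ≤ k) :
    Nat.totient (p ^ (k+1)) = Nat.totient (p ^ k) * p := by
  rw [Nat.totient_prime_pow hp (by omega), Nat.totient_prime_pow hp (by omega)]
  have h1 : k + 1 - 1 = (k - 1) + 1 := by omega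
  rw [h1, pow_succ]
  ring

lemma stmt10_Q (p b : ℕ) (hp : p.Prime) (h3p : 3 ≤ p)
    (hroot1 : orderOf (b : ZMod p) = Nat.totient p)
    (hroot2 : orderOf (b : ZMod (p ^ 2)) = Nat.totient (p ^ 2)) :
    ∀ k, 1 ≤ k → ∃ c : ℤ, (b:ℤ) ^ Nat.totient (p^k) = 1 + c * (p:ℤ)^k ∧ ¬ ((p:ℤ) ∣ c) := by
  intro k hk
  induction k with
  | zero => omega
  | succ n ih =>
    rcases Nat.eq_zero_or_pos n with rfl | hn
    · -- base case k = 1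
      have hfe : ((((b:ℤ) ^ (p - 1) - 1) : ℤ) : ZMod p) = 0 := by
        have h1 : (b : ZMod p) ^ (p - 1) = 1 := by
          rw [← Nat.totient_prime hp, ← hroot1]; exact pow_orderOf_eq_one _
        push_cast
        rw [h1]; ring
      obtain ⟨c, hc⟩ := (ZMod.intCast_zmod_eq_zero_iff_dvd _ p).mp hfe
      refine ⟨c, ?_, ?_⟩
      · rw [pow_one, Nat.totient_prime hp]
        push_cast at hc ⊢
        linarith [hc]
      · intro ⟨e, he⟩
        have h2 : ((((b:ℤ) ^ (p - 1) - 1) : ℤ) : ZMod (p^2)) = 0 :=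
          (ZMod.intCast_zmod_eq_zero_iff_dvd _ _).mpr ⟨e, by rw [hc, he]; push_cast; ring⟩
        have h3 : (b : ZMod (p^2)) ^ (p - 1) = 1 := by
          push_cast at h2
          have := sub_eq_zero.mp h2
          exact_mod_cast this
        have h4 : orderOf (b : ZMod (p^2)) ∣ p - 1 := orderOf_dvd_of_pow_eq_one h3
        rw [hroot2, Nat.totient_prime_pow hp (by omega)] at h4
        have h5 := Nat.le_of_dvd (by omega) h4
        simp at h5
        have h6 : 2 * (p-1) ≤ p * (p-1) := Nat.mul_le_mul_right _ (by omega)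
        omega
    · obtain ⟨c, hc, hcp⟩ := ih hn
      obtain ⟨d, hd⟩ := stmt10_key p hp h3p n hn c
      refine ⟨c + d * p, ?_, ?_⟩
      · rw [show Nat.totient (p^(n+1)) = Nat.totient (p^n) * p from stmt10_tot p hp n hn,
          pow_mul, hc, hd]
      · intro hdvd
        apply hcp
        obtain ⟨e, he⟩ := hdvd
        exact ⟨e - d, by linarith [he]⟩

lemma stmt10_ord (p b : ℕ) (hp : p.Prime) (h3p : 3 ≤ p) (hbp : Nat.Coprime b p)
    (hroot1 : orderOf (b : ZMod p) = Nat.totient p)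
    (hroot2 : orderOf (b : ZMod (p ^ 2)) = Nat.totient (p ^ 2)) :
    ∀ k, 1 ≤ k → orderOf (b : ZMod (p^k)) = Nat.totient (p^k) := by
  intro k hk
  induction k with
  | zero => omega
  | succ n ih =>
    rcases Nat.eq_zero_or_pos n with rfl | hn
    · rw [pow_one]; exact hroot1
    · have ihn := ih hn
      have hppos : 0 < p := hp.pos
      set d := orderOf (b : ZMod (p^(n+1))) with hd
      -- d ∣ totient (p^(n+1))
      have hd1 : d ∣ Nat.totient (p^(n+1)) := by
        apply orderOf_dvd_of_pow_eq_one
        have := Nat.ModEq.pow_totient (Nat.Coprime.pow_right (n+1) hbp)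
        have h2 := (ZMod.natCast_eq_natCast_iff _ _ _).mpr this
        push_cast at h2
        exact h2
      -- totient (p^n) ∣ d
      have hd2 : Nat.totient (p^n) ∣ d := by
        rw [← ihn]
        apply orderOf_dvd_of_pow_eq_one
        have h1 : (b : ZMod (p^(n+1))) ^ d = 1 := pow_orderOf_eq_one _
        have h2 := congrArg (ZMod.castHom (pow_dvd_pow p (Nat.le_succ n)) (ZMod (p^n))) h1
        simp only [map_pow, map_natCast, map_one] at h2
        exact h2
      -- d ≠ totient (p^n)
      have hd3 : ¬ ((b : ZMod (p^(n+1))) ^ Nat.totient (p^n) = 1) := by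
        obtain ⟨c, hc, hcp⟩ := stmt10_Q p b hp h3p hroot1 hroot2 n hn
        intro h1
        apply hcp
        have h2 : ((c * (p:ℤ)^n : ℤ) : ZMod (p^(n+1))) = 0 := by
          rw [show (c * (p:ℤ)^n) = (1 + c * (p:ℤ)^n) - 1 by ring, ← hc]
          push_cast
          rw [h1]; ring
        obtain ⟨e, he⟩ := (ZMod.intCast_zmod_eq_zero_iff_dvd _ _).mp h2
        have hpn : ((p:ℤ))^n ≠ 0 := by positivity
        refine ⟨e, ?_⟩
        have h3 : (p:ℤ)^n * c = (p:ℤ)^n * (p * e) := by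
          push_cast at he
          linear_combination he
        exact mul_left_cancel₀ hpn h3
      -- combine
      obtain ⟨e, he⟩ := hd2
      have htot := stmt10_tot p hp n hn
      have htpos : 0 < Nat.totient (p^n) := Nat.totient_pos.mpr (by positivity)
      rw [htot] at hd1 ⊢
      rw [he] at hd1 ⊢
      have hep : e ∣ p := (mul_dvd_mul_iff_left (by omega : Nat.totient (p^n) ≠ 0)).mp hd1
      rcases (Nat.Prime.eq_one_or_self_of_dvd hp e hep) with rfl | rfl
      · exfalso
        apply hd3
        rw [mul_one] at he
        rw [← he]
        exact pow_orderOf_eq_one _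
      · rfl
theorem stmt10 (p m b a : ℕ) (hm : 1 ≤ m) (hp : p.Prime) (hpodd : Odd p)
    (hb : 2 ≤ b) (hbp : Nat.Coprime b p)
    (hroot1 : orderOf (b : ZMod p) = Nat.totient p)
    (hroot2 : orderOf (b : ZMod (p ^ 2)) = Nat.totient (p ^ 2))
    (ha1 : 1 ≤ a) (ha2 : a < p ^ m) (hap : Nat.Coprime a p)
    (q : ℕ → ℕ)
    (hq : ∀ i, 1 ≤ i → q i = (a * b ^ (i - 1) % p ^ m) * b / p ^ m) :
    (∀ i, 1 ≤ i → q (i + Nat.totient (p ^ m)) = q i) ∧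
    (∀ t, 0 < t → t < Nat.totient (p ^ m) → ∃ i, 1 ≤ i ∧ q (i + t) ≠ q i) := by
  have h3p : 3 ≤ p := by
    obtain ⟨j, hj⟩ := hpodd
    have h2 := hp.two_le
    omega
  set n := p ^ m with hn
  have hnpos : 0 < n := by positivity
  have hT := stmt10_ord p b hp h3p hbp hroot1 hroot2 m hm
  have hbT : (b : ZMod n) ^ Nat.totient n = 1 := by
    rw [← hT]; exact pow_orderOf_eq_one _
  set T := Nat.totient n with hTdef
  constructor
  · intro i hi
    rw [hq i hi, hq _ (by omega)]
    have hmod : a * b ^ (i + T - 1) % n = a * b ^ (i - 1) % n := by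
      have hidx : i + T - 1 = (i - 1) + T := by omega
      rw [hidx]
      have : (↑(a * b ^ ((i - 1) + T)) : ZMod n) = (↑(a * b ^ (i - 1)) : ZMod n) := by
        push_cast
        rw [pow_add, hbT]
        ring
      exact (ZMod.natCast_eq_natCast_iff _ _ _).mp this
    rw [hmod]
  · intro t ht0 htT
    by_contra hcon
    push_neg at hcon
    -- hcon : ∀ i, 1 ≤ i → q (i + t) = q i
    set r : ℕ → ℕ := fun i => a * b ^ i % n with hr
    have hrlt : ∀ i, r i < n := fun i => Nat.mod_lt _ hnpos
    have hqr : ∀ i, q (i + 1) = r i * b / n := by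
      intro i
      rw [hq (i + 1) (by omega)]
      simp [hr]
    have hrec : ∀ i, (r (i + 1) : ℤ) = r i * b - q (i + 1) * n := by
      intro i
      have h1 : r (i + 1) = r i * b % n := by
        show a * b ^ (i + 1) % n = a * b ^ i % n * b % n
        rw [Nat.mod_mul_mod, pow_succ, mul_assoc]
      have h2 := Nat.div_add_mod (r i * b) n
      rw [hqr i, h1]
      zify at h2
      push_cast
      linarith [h2]
    set D : ℕ → ℤ := fun i => (r (i + t) : ℤ) - r i with hD
    have hDrec : ∀ i, D (i + 1) = b * D i := by
      intro i
      have h1 : i + 1 + t = (i + t) + 1 := by omega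
      have h2 : q (i + 1 + t) = q (i + 1) := hcon (i + 1) (by omega)
      simp only [hD]
      rw [h1, hrec (i + t), hrec i, show i + t + 1 = i + 1 + t by omega, h2]
      ring
    have hDpow : ∀ i, D i = b ^ i * D 0 := by
      intro i
      induction i with
      | zero => simp
      | succ j ihj => rw [hDrec j, ihj]; ring
    have hD0 : D 0 = 0 := by
      by_contra hne
      have h1 : 1 ≤ |D 0| := Int.one_le_abs (by omega)
      have h2 : |D n| < n := by
        have := hrlt (n + t); have := hrlt n
        simp only [hD]
        rw [abs_lt]
        constructor <;> [push_cast; push_cast] <;> omega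
      have h3 : (n : ℤ) ≤ |D n| := by
        rw [hDpow n, abs_mul, abs_pow]
        have hb2 : (2:ℤ) ^ n ≤ |(b:ℤ)| ^ n := by
          apply pow_le_pow_left₀ (by norm_num)
          rw [abs_of_nonneg (by positivity)]
          exact_mod_cast hb
        have hn2 : (n:ℤ) < 2 ^ n := by exact_mod_cast Nat.lt_two_pow_self (n := n)
        nlinarith
      omega
    have hrt : r t = r 0 := by
      have := hD0
      simp only [hD, zero_add] at this
      omega
    have hr0 : r 0 = a := by
      simp only [hr, pow_zero, mul_one]
      exact Nat.mod_eq_of_lt ha2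
    -- so a * b ^ t ≡ a [MOD n]
    have hzmod : (a : ZMod n) * (b : ZMod n) ^ t = (a : ZMod n) * 1 := by
      have h1 : (↑(a * b ^ t) : ZMod n) = (↑a : ZMod n) := by
        rw [(ZMod.natCast_eq_natCast_iff _ _ _)]
        show a * b ^ t % n = a % n
        have h3 : a * b ^ t % n = a * b ^ 0 % n := hrt
        simpa using h3
      push_cast at h1
      rw [h1, mul_one]
    have hu : IsUnit (a : ZMod n) := by
      rw [ZMod.isUnit_iff_coprime]
      exact hap.pow_right m
    have hbt1 : (b : ZMod n) ^ t = 1 := hu.mul_left_cancel hzmod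
    have hdvd : T ∣ t := by
      have h4 := orderOf_dvd_of_pow_eq_one hbt1
      rwa [hT] at h4
    have := Nat.le_of_dvd ht0 hdvd
    omega
end

section
/- Let b ≥ 2 be an integer and p a prime with gcd(b,p) = 1, and let m ≥ 1. Let a_k denote the k-th base-b digit of the Stoneham number α_{b,p} = ∑_{j≥1} 1/(p^j·b^{p^j}), let N = ord_{p^m}(b) be the multiplicative order of b modulo p^m, and let q_1, …, q_N be the digits produced by the base-b algorithm for the fraction (∑_{j=0}^{m−1} p^j)/p^m. Then q_i = a_{p^m + jN + i} for every i ∈ {1, 2, …, N} and every j ∈ {0, 1, …, p·φ(p^m)/N − 1}. -/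
private lemma modeq_sum (M : ℕ) (f g : ℕ → ℕ) (s : Finset ℕ) (h : ∀ x ∈ s, f x ≡ g x [MOD M]) :
    (∑ x ∈ s, f x) ≡ (∑ x ∈ s, g x) [MOD M] := by
  unfold Nat.ModEq
  rw [Finset.sum_nat_mod s M f, Finset.sum_nat_mod s M g]
  congr 1
  exact Finset.sum_congr rfl h

private lemma term_modeq (b p m n : ℕ) (hp : p.Prime) (hbp : Nat.Coprime b p) (hn : n < m) :
    b ^ (p ^ m - p ^ (n + 1)) * p ^ (m - (n + 1)) ≡ p ^ (m - (n + 1)) [MOD p ^ m] := by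
  have hcop : Nat.Coprime b (p ^ (n+1)) := hbp.pow_right _
  have hEuler : b ^ (Nat.totient (p ^ (n+1))) ≡ 1 [MOD p ^ (n+1)] := Nat.ModEq.pow_totient hcop
  have htot : Nat.totient (p ^ (n+1)) = p ^ n * (p - 1) := by
    rw [Nat.totient_prime_pow hp (by omega)]; congr 1
  have hdvd : Nat.totient (p ^ (n+1)) ∣ p ^ m - p ^ (n+1) := by
    rw [htot]
    have he : p ^ m - p ^ (n+1) = p ^ (n+1) * (p ^ (m - (n+1)) - 1) := by
      rw [Nat.mul_sub_one, ← pow_add]; congr 2; omega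
    rw [he]
    apply mul_dvd_mul (pow_dvd_pow p (by omega))
    have := Nat.sub_dvd_pow_sub_pow p 1 (m - (n+1))
    simpa using this
  have h1 : b ^ (p ^ m - p ^ (n + 1)) ≡ 1 [MOD p ^ (n+1)] := by
    obtain ⟨t, ht⟩ := hdvd
    calc b ^ (p ^ m - p ^ (n+1)) = (b ^ Nat.totient (p ^ (n+1))) ^ t := by rw [← pow_mul, ht]
    _ ≡ 1 ^ t [MOD p ^ (n+1)] := hEuler.pow t
    _ = 1 := one_pow t
  have h2 := h1.mul_right' (c := p ^ (m - (n+1)))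
  rw [one_mul, ← pow_add] at h2
  have hmm : n + 1 + (m - (n+1)) = m := by omega
  rwa [hmm] at h2

private lemma head_id (b p m n k : ℕ) (hp : 2 ≤ p) (hn : n < m) :
    b ^ (p ^ m + k) * p ^ m =
      b ^ k * (b ^ (p ^ m - p ^ (n + 1)) * p ^ (m - (n + 1))) * (p ^ (n + 1) * b ^ (p ^ (n + 1))) := by
  have h1 : p ^ (n+1) ≤ p ^ m := Nat.pow_le_pow_right (by omega) (by omega)
  have h2 : p ^ (n+1) * p ^ (m - (n+1)) = p ^ m := by
    rw [← pow_add]; congr 1; omega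
  calc b ^ (p ^ m + k) * p ^ m
      = b ^ k * (b ^ (p ^ m - p ^ (n+1)) * b ^ (p ^ (n+1))) * (p ^ (n+1) * p ^ (m - (n+1))) := by
        rw [h2, ← pow_add, ← pow_add]; congr 2; omega
    _ = _ := by ring

private lemma tail_nat_ineq (b p m K n : ℕ) (hb : 2 ≤ b) (hp : 2 ≤ p) (hm : 1 ≤ m)
    (hK : K ≤ p ^ (m + 1)) :
    b ^ K * (p ^ (m + 1) * 4 ^ n) ≤ p ^ (n + m + 1) * b ^ (p ^ (n + m + 1)) := by
  have h4 : 4 ^ n ≤ b ^ (2 * n) := by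
    calc 4 ^ n = (2^2) ^ n := by norm_num
    _ ≤ (b^2) ^ n := Nat.pow_le_pow_left (Nat.pow_le_pow_left hb 2) n
    _ = b ^ (2 * n) := by rw [← pow_mul, mul_comm]
  have hpn : n + 1 ≤ p ^ n := by
    calc n + 1 ≤ 2 ^ n := Nat.lt_two_pow_self
    _ ≤ p ^ n := Nat.pow_le_pow_left hp n
  have hpm4 : 4 ≤ p ^ (m + 1) := by
    calc (4:ℕ) = 2 ^ 2 := by norm_num
    _ ≤ 2 ^ (m+1) := Nat.pow_le_pow_right (by omega) (by omega)
    _ ≤ p ^ (m+1) := Nat.pow_le_pow_left hp (m+1)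
  have hexp : K + 2 * n ≤ p ^ (n + m + 1) := by
    have h : p ^ (n + m + 1) = p ^ n * p ^ (m + 1) := by rw [← pow_add]; ring_nf
    rw [h]
    have := Nat.mul_le_mul hpn (le_refl (p ^ (m+1)))
    nlinarith [hpm4, hK]
  have hpp : p ^ (m+1) ≤ p ^ (n + m + 1) := Nat.pow_le_pow_right (by omega) (by omega)
  calc b ^ K * (p ^ (m + 1) * 4 ^ n) ≤ b ^ K * (p ^ (n + m + 1) * b ^ (2 * n)) :=
        Nat.mul_le_mul_left _ (Nat.mul_le_mul hpp h4)
    _ = p ^ (n + m + 1) * b ^ (K + 2 * n) := by rw [pow_add]; ring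
    _ ≤ p ^ (n + m + 1) * b ^ (p ^ (n + m + 1)) :=
        Nat.mul_le_mul_left _ (Nat.pow_le_pow_right (by omega) hexp)

theorem stmt12 (b p m : ℕ) (hb : 2 ≤ b) (hp : p.Prime) (hbp : Nat.Coprime b p)
    (hm : 1 ≤ m)
    (N : ℕ) (hN : N = orderOf (b : ZMod (p ^ m)))
    (a : ℕ) (ha : a = ∑ j ∈ Finset.range m, p ^ j)
    (q : ℕ → ℕ)
    (hq : ∀ i, 1 ≤ i → q i = (a * b ^ (i - 1) % p ^ m) * b / p ^ m) :
    ∀ i, 1 ≤ i → i ≤ N → ∀ j, j ≤ p * Nat.totient (p ^ m) / N - 1 →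
      q i = digit b (stoneham b p) (p ^ m + j * N + i) := by
  intro i hi1 hiN j hj
  have hp2 : 2 ≤ p := hp.two_le
  have hM0 : 0 < p ^ m := Nat.pow_pos (by omega)
  have hM1 : 1 < p ^ m := by
    calc 1 < p := by omega
    _ = p ^ 1 := (pow_one p).symm
    _ ≤ p ^ m := Nat.pow_le_pow_right (by omega) hm
  set M := p ^ m with hMdef
  -- basic N facts
  have hcopM : Nat.Coprime b M := hbp.pow_right m
  have hbZ : ((b : ZMod M)) ^ Nat.totient M = 1 := by
    have h1 : ((b ^ Nat.totient M : ℕ) : ZMod M) = ((1 : ℕ) : ZMod M) :=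
      (ZMod.natCast_eq_natCast_iff _ _ _).mpr (Nat.ModEq.pow_totient hcopM)
    push_cast at h1
    exact h1
  have hNdvd : N ∣ Nat.totient M := hN ▸ orderOf_dvd_of_pow_eq_one hbZ
  have hphi0 : 0 < Nat.totient M := Nat.totient_pos.mpr hM0
  have hN0 : 0 < N := Nat.pos_of_dvd_of_pos hNdvd hphi0
  have hbN : b ^ N ≡ 1 [MOD M] := by
    have h1 : ((b ^ N : ℕ) : ZMod M) = ((1 : ℕ) : ZMod M) := by
      push_cast
      rw [hN]
      exact pow_orderOf_eq_one _
    exact (ZMod.natCast_eq_natCast_iff _ _ _).mp h1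
  set k := j * N + i with hkdef
  have hk1 : 1 ≤ k := by omega
  -- bound on k
  have hkle : k ≤ p * Nat.totient M := by
    have hd1 : 1 ≤ p * Nat.totient M / N := by
      apply Nat.one_le_div_iff hN0 |>.mpr
      calc N ≤ Nat.totient M := Nat.le_of_dvd hphi0 hNdvd
      _ ≤ p * Nat.totient M := Nat.le_mul_of_pos_left _ (by omega)
    have hjlt : j < p * Nat.totient M / N := by omega
    calc k = j * N + i := rfl
    _ ≤ j * N + N := by omega
    _ = (j + 1) * N := by ring
    _ ≤ (p * Nat.totient M / N) * N := Nat.mul_le_mul_right _ (by omega)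
    _ ≤ p * Nat.totient M := Nat.div_mul_le_self _ _
  have hKle : M + k ≤ p ^ (m + 1) := by
    have htot : Nat.totient M = p ^ (m-1) * (p - 1) := Nat.totient_prime_pow hp (by omega)
    have h2 : p * Nat.totient M = M * (p - 1) := by
      rw [htot, ← mul_assoc, ← pow_succ']
      congr 2
      omega
    have h3 : M + M * (p - 1) = p ^ (m+1) := by
      have h4 : M + M * (p - 1) = M * (1 + (p - 1)) := by ring
      rw [h4]
      have hh : 1 + (p - 1) = p := by omega
      rw [hh, hMdef, ← pow_succ]
    omega
  -- the integer A
  set A := ∑ n ∈ Finset.range m, b ^ (p ^ m - p ^ (n + 1)) * p ^ (m - (n + 1)) with hAdef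
  have hAa : A ≡ a [MOD M] := by
    have h1 : A ≡ ∑ n ∈ Finset.range m, p ^ (m - (n+1)) [MOD M] :=
      modeq_sum M _ _ _ (fun n hn => term_modeq b p m n hp hbp (Finset.mem_range.mp hn))
    have h2 : ∑ n ∈ Finset.range m, p ^ (m - (n+1)) = a := by
      rw [ha, ← Finset.sum_range_reflect (fun j => p ^ j) m]
      apply Finset.sum_congr rfl
      intro n hn
      congr 1
      omega
    rwa [h2] at h1
  -- define Q and the nat-side digit computation
  set Q := b ^ k * A / M with hQdef
  set r2 := b ^ k * A % M with hr2def
  have hr2lt : r2 < M := Nat.mod_lt _ hM0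
  have hQb : Q % b = q i := by
    set r := a * b ^ (i - 1) % M with hrdef
    have hrlt : r < M := Nat.mod_lt _ hM0
    have hbk : b ^ k = b * b ^ (k - 1) := by
      rw [← pow_succ']
      congr 1
      omega
    have hmod : b ^ (k-1) * A % M = r := by
      have hkm1 : k - 1 = j * N + (i - 1) := by omega
      have hbjN : b ^ (j * N) ≡ 1 [MOD M] := by
        have h5 : b ^ (j * N) = (b ^ N) ^ j := by rw [← pow_mul, mul_comm]
        rw [h5]
        calc (b ^ N) ^ j ≡ 1 ^ j [MOD M] := hbN.pow j
        _ = 1 := one_pow j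
      have h1 : b ^ (k - 1) ≡ b ^ (i-1) [MOD M] := by
        rw [hkm1, pow_add]
        calc b ^ (j*N) * b ^ (i-1) ≡ 1 * b ^ (i-1) [MOD M] := hbjN.mul_right _
        _ = b ^ (i-1) := one_mul _
      have h2 : b ^ (k-1) * A ≡ a * b ^ (i-1) [MOD M] := by
        calc b ^ (k-1) * A ≡ b ^ (i-1) * a [MOD M] := h1.mul hAa
        _ = a * b ^ (i-1) := mul_comm _ _
      exact h2
    set d := b ^ (k-1) * A / M with hddef
    have hsplit : b ^ k * A = M * (b * d) + b * r := by
      rw [hbk, mul_assoc]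
      conv_lhs => rw [← Nat.div_add_mod (b ^ (k-1) * A) M]
      rw [hmod]
      ring
    have hQval : Q = b * d + b * r / M := by
      rw [hQdef, hsplit, Nat.mul_add_div hM0]
    have hbrlt : b * r / M < b := by
      apply Nat.div_lt_of_lt_mul
      calc b * r < b * M := by
            exact mul_lt_mul_of_pos_left hrlt (by omega)
      _ = M * b := mul_comm _ _
    rw [hQval, hq i hi1, ← hrdef, Nat.mul_add_mod, Nat.mod_eq_of_lt hbrlt, mul_comm]
  -- real analysis part
  have hbR : (1:ℝ) < (b:ℝ) := by exact_mod_cast (by omega : 1 < b)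
  have hpR : (2:ℝ) ≤ (p:ℝ) := by exact_mod_cast hp2
  have hMR : (0:ℝ) < (M:ℝ) := by exact_mod_cast hM0
  set K := M + j * N + i with hKdef
  have hKeq : K = M + k := by rw [hKdef, hkdef]; ring
  set f : ℕ → ℝ := fun n => 1 / ((p:ℝ) ^ (n+1) * (b:ℝ) ^ (p ^ (n+1))) with hfdef
  have hfpos : ∀ n, 0 < f n := by
    intro n
    apply div_pos one_pos
    positivity
  have hfsum : Summable f := by
    apply Summable.of_nonneg_of_le (fun n => (hfpos n).le) (fun n => ?_)
      (summable_geometric_of_lt_one (by norm_num : (0:ℝ) ≤ 1/2) (by norm_num))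
    have h1 : (2:ℝ) ^ n ≤ (p:ℝ) ^ (n+1) * (b:ℝ) ^ (p ^ (n+1)) := by
      have hb1 : (1:ℝ) ≤ (b:ℝ) ^ (p ^ (n+1)) := one_le_pow₀ (by linarith)
      calc (2:ℝ) ^ n ≤ (p:ℝ) ^ n := pow_le_pow_left₀ (by norm_num) hpR n
      _ ≤ (p:ℝ) ^ (n+1) := pow_le_pow_right₀ (by linarith) (by omega)
      _ = (p:ℝ) ^ (n+1) * 1 := (mul_one _).symm
      _ ≤ _ := mul_le_mul_of_nonneg_left hb1 (by positivity)
    calc f n = 1 / ((p:ℝ) ^ (n+1) * (b:ℝ) ^ (p ^ (n+1))) := rfl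
    _ ≤ 1 / (2:ℝ)^n := one_div_le_one_div_of_le (by positivity) h1
    _ = (1/2:ℝ)^n := by rw [div_pow, one_pow]
  set g : ℕ → ℝ := fun n => f n * (b:ℝ) ^ K with hgdef
  have hgsum : Summable g := hfsum.mul_right _
  have hxsplit : stoneham b p * (b:ℝ) ^ K =
      (∑ n ∈ Finset.range m, g n) + ∑' n, g (n + m) := by
    rw [stoneham, ← tsum_mul_right]
    exact (Summable.sum_add_tsum_nat_add m hgsum).symm
  -- head
  have hhead : ∑ n ∈ Finset.range m, g n = ((b ^ k * A : ℕ) : ℝ) / M := by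
    have hcast : ((b ^ k * A : ℕ) : ℝ) = ∑ n ∈ Finset.range m,
        ((b ^ k * (b ^ (p ^ m - p ^ (n+1)) * p ^ (m - (n+1))) : ℕ) : ℝ) := by
      rw [hAdef, Finset.mul_sum]
      push_cast
      ring
    rw [hcast, Finset.sum_div]
    apply Finset.sum_congr rfl
    intro n hn
    have hn' : n < m := Finset.mem_range.mp hn
    have hid := head_id b p m n k hp2 hn'
    have hden : (0:ℝ) < (p:ℝ) ^ (n+1) * (b:ℝ) ^ (p ^ (n+1)) := by positivity
    show f n * (b:ℝ) ^ K = _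
    rw [hfdef]
    show 1 / ((p:ℝ) ^ (n+1) * (b:ℝ) ^ (p ^ (n+1))) * (b:ℝ) ^ K = _
    rw [one_div, inv_mul_eq_div, div_eq_div_iff hden.ne' hMR.ne', hKeq]
    have hidR : ((b:ℝ)) ^ (p ^ m + k) * (p:ℝ) ^ m =
        (b:ℝ) ^ k * ((b:ℝ) ^ (p ^ m - p ^ (n + 1)) * (p:ℝ) ^ (m - (n + 1))) *
          ((p:ℝ) ^ (n + 1) * (b:ℝ) ^ (p ^ (n + 1))) := by exact_mod_cast congrArg (Nat.cast : ℕ → ℝ) hid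
    calc (b:ℝ) ^ (M + k) * (M:ℝ) = (b:ℝ) ^ (p ^ m + k) * (p:ℝ)^m := by rw [hMdef]; push_cast; ring
    _ = _ := by rw [hidR]; push_cast; ring
  -- tail
  have htail_nonneg : 0 ≤ ∑' n, g (n + m) := tsum_nonneg (fun n => by
    have h1 := hfpos (n + m)
    have hbK : (0:ℝ) < (b:ℝ) ^ K := by positivity
    have : g (n + m) = f (n + m) * (b:ℝ) ^ K := rfl
    rw [this]
    positivity)
  have htail_lt : ∑' n, g (n + m) < 1 / (M:ℝ) := by
    have hbound : ∀ n, g (n + m) ≤ (1 / (p:ℝ) ^ (m+1)) * (1/4) ^ n := by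
      intro n
      have hnat := tail_nat_ineq b p m K n hb hp2 hm (by omega)
      have hden : (0:ℝ) < (p:ℝ) ^ (n + m + 1) * (b:ℝ) ^ (p ^ (n + m + 1)) := by positivity
      have hden2 : (0:ℝ) < (p:ℝ) ^ (m+1) * 4 ^ n := by positivity
      calc g (n + m) = (b:ℝ) ^ K / ((p:ℝ) ^ (n + m + 1) * (b:ℝ) ^ (p ^ (n + m + 1))) := by
            show f (n + m) * (b:ℝ) ^ K = _
            rw [hfdef]
            show 1 / ((p:ℝ) ^ (n + m + 1) * (b:ℝ) ^ (p ^ (n + m + 1))) * (b:ℝ) ^ K = _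
            rw [one_div, inv_mul_eq_div]
      _ ≤ 1 / ((p:ℝ) ^ (m+1) * 4 ^ n) := by
            rw [div_le_div_iff₀ hden hden2, one_mul]
            calc (b:ℝ) ^ K * ((p:ℝ) ^ (m+1) * 4 ^ n)
                = ((b ^ K * (p ^ (m + 1) * 4 ^ n) : ℕ) : ℝ) := by push_cast; ring
            _ ≤ ((p ^ (n + m + 1) * b ^ (p ^ (n + m + 1)) : ℕ) : ℝ) := by exact_mod_cast hnat
            _ = _ := by push_cast; ring
      _ = (1 / (p:ℝ) ^ (m+1)) * (1/4) ^ n := by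
            rw [div_pow, one_pow, div_mul_div_comm, one_mul]
    have hgeo : Summable (fun n : ℕ => (1 / (p:ℝ) ^ (m+1)) * (1/4) ^ n) :=
      (summable_geometric_of_lt_one (by norm_num) (by norm_num)).mul_left _
    have hle : ∑' n, g (n + m) ≤ (1 / (p:ℝ) ^ (m+1)) * (4/3) := by
      have h1 : ∑' n, g (n + m) ≤ ∑' n : ℕ, (1 / (p:ℝ) ^ (m+1)) * (1/4) ^ n :=
        Summable.tsum_le_tsum hbound ((summable_nat_add_iff m).mpr hgsum) hgeo
      have h2 : ∑' n : ℕ, (1 / (p:ℝ) ^ (m+1)) * (1/4) ^ n = (1 / (p:ℝ) ^ (m+1)) * (4/3) := by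
        rw [tsum_mul_left, tsum_geometric_of_lt_one (by norm_num) (by norm_num)]
        norm_num
      linarith
    have hfin : (1 / (p:ℝ) ^ (m+1)) * (4/3) < 1 / (M:ℝ) := by
      rw [hMdef]
      have hpm : (0:ℝ) < (p:ℝ) ^ m := by positivity
      have hpm1 : (0:ℝ) < (p:ℝ) ^ (m+1) := by positivity
      have hcast : ((p ^ m : ℕ) : ℝ) = (p:ℝ) ^ m := by push_cast; ring
      rw [hcast, div_mul_eq_mul_div, one_mul, div_lt_div_iff₀ hpm1 hpm]
      have h5 : ((p:ℝ)) ^ (m+1) = (p:ℝ) * (p:ℝ) ^ m := by ring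
      rw [h5]
      nlinarith [hpm, hpR]
    linarith
  -- floor computation
  have hsplit2 : ((b ^ k * A : ℕ) : ℝ) / M = (Q : ℝ) + (r2 : ℝ) / M := by
    have h1 : b ^ k * A = M * Q + r2 := (Nat.div_add_mod _ _).symm
    rw [h1]
    push_cast
    field_simp
  have hEbound : (r2:ℝ) / M + ∑' n, g (n + m) < 1 := by
    have h1 : (r2:ℝ) + 1 ≤ (M:ℝ) := by exact_mod_cast hr2lt
    have h2 : (r2:ℝ)/M + 1/M ≤ 1 := by
      rw [← add_div, div_le_one hMR]
      linarith
    linarith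
  have hfloor : ⌊stoneham b p * (b:ℝ) ^ K⌋ = (Q : ℤ) := by
    rw [Int.floor_eq_iff, hxsplit, hhead, hsplit2]
    constructor
    · push_cast
      have h1 : (0:ℝ) ≤ (r2:ℝ) / M := by positivity
      linarith
    · push_cast
      linarith
  show q i = digit b (stoneham b p) K
  rw [digit, hfloor, ← hQb]
  rw [← Int.natCast_mod, Int.toNat_natCast]
end

section
/- Let b ≥ 2 be an integer, p a prime with gcd(b,p) = 1, and m ≥ 1. Set x = ∑_{n=1}^m 1/(p^n·b^{p^n}) and let N = ord_{p^m}(b) be the multiplicative order of b modulo p^m. Then the base-b digit sequence of x is eventually periodic with preperiod length p^m and period N; in particular, for every k > p^m, digit_b(x, k + N) = digit_b(x, k). -/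
lemma floor_nat_div_real (n d : ℕ) : ⌊((n : ℝ) / (d : ℝ))⌋ = ((n / d : ℕ) : ℤ) := by
  rw [← Int.natCast_floor_eq_floor (by positivity), Nat.floor_div_eq_div]

theorem stmt14 (b p m : ℕ) (hb : 2 ≤ b) (hp : p.Prime) (hbp : Nat.Coprime b p)
    (hm : 1 ≤ m)
    (x : ℝ) (hx : x = ∑ n ∈ Finset.Icc 1 m, 1 / ((p : ℝ) ^ n * (b : ℝ) ^ (p ^ n)))
    (N : ℕ) (hN : N = orderOf (b : ZMod (p ^ m))) :
    ∀ k, p ^ m < k → digit b x (k + N) = digit b x k := by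
  have hp2 : 2 ≤ p := hp.two_le
  set A : ℕ := ∑ n ∈ Finset.Icc 1 m, p ^ (m - n) * b ^ (p ^ m - p ^ n) with hA
  -- x = A / (p^m * b^(p^m))
  have hxA : x = (A : ℝ) / ((p : ℝ) ^ m * (b : ℝ) ^ (p ^ m)) := by
    rw [hx, hA]
    push_cast
    rw [Finset.sum_div]
    refine Finset.sum_congr rfl ?_
    intro n hn
    obtain ⟨hn1, hnm⟩ := Finset.mem_Icc.mp hn
    have hpn : p ^ n ≤ p ^ m := Nat.pow_le_pow_right (by omega) hnm
    have hb0 : (0 : ℝ) < b := by positivity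
    have hp0 : (0 : ℝ) < p := by positivity
    rw [div_eq_div_iff (by positivity) (by positivity), one_mul, mul_mul_mul_comm,
      ← pow_add, ← pow_add]
    congr 2 <;> omega
  -- floor computation
  have hfloor : ∀ j : ℕ, p ^ m ≤ j →
      ⌊x * (b : ℝ) ^ j⌋ = ((A * b ^ (j - p ^ m) / p ^ m : ℕ) : ℤ) := by
    intro j hj
    have hb0 : (0 : ℝ) < b := by positivity
    have hp0 : (0 : ℝ) < p := by positivity
    have : x * (b : ℝ) ^ j = ((A * b ^ (j - p ^ m) : ℕ) : ℝ) / ((p ^ m : ℕ) : ℝ) := by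
      rw [hxA]
      push_cast
      have ej : (b : ℝ) ^ j = (b : ℝ) ^ (j - p ^ m) * (b : ℝ) ^ (p ^ m) := by
        rw [← pow_add]; congr 1; omega
      rw [div_mul_eq_mul_div, div_eq_div_iff (by positivity) (by positivity), ej]
      ring
    rw [this, floor_nat_div_real]
  -- p^m divides b^N - 1
  have hbN : (1 : ℕ) ≤ b ^ N := Nat.one_le_pow _ _ (by omega)
  have hdvd : p ^ m ∣ b ^ N - 1 := by
    have h1 : (b : ZMod (p ^ m)) ^ N = 1 := by rw [hN]; exact pow_orderOf_eq_one _
    have h2 : b ^ N ≡ 1 [MOD p ^ m] := by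
      rw [← ZMod.natCast_eq_natCast_iff]
      push_cast
      simpa using h1
    exact (Nat.modEq_iff_dvd' hbN).mp h2.symm
  obtain ⟨s, hs⟩ := hdvd
  have hbNs : b ^ N = p ^ m * s + 1 := by omega
  intro k hk
  have hpm0 : 0 < p ^ m := Nat.pow_pos (by omega)
  have h1 := hfloor (k + N) (by omega)
  have h2 := hfloor k (by omega)
  unfold digit
  rw [h1, h2]
  -- reduce to a natural number statement
  have key : A * b ^ (k + N - p ^ m) / p ^ m % b = A * b ^ (k - p ^ m) / p ^ m % b := by
    set j := k - p ^ m with hj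
    have hj1 : 1 ≤ j := by omega
    have e1 : k + N - p ^ m = j + N := by omega
    have e2 : A * b ^ (j + N) = A * b ^ j + (A * b ^ (j - 1) * s * b) * p ^ m := by
      rw [pow_add, ← mul_assoc, hbNs]
      have : b ^ j = b ^ (j - 1) * b := by
        rw [← pow_succ]; congr 1; omega
      rw [this]; ring
    rw [e1, e2, Nat.add_mul_div_right _ _ hpm0, Nat.add_mul_mod_self_right]
  rw [← Int.natCast_mod, ← Int.natCast_mod, Int.toNat_natCast, Int.toNat_natCast, key]
end

section
/- Let c ≥ 2 be an integer and define F_c(x) := ∑_{n≥1} x^{c^n}/c^n for complex x with |x| < 1. Then F_c does not agree with any rational function: there do not exist polynomials A(x), B(x) ∈ ℂ[x] with B not identically zero such that B(x)·F_c(x) = A(x) for all complex x with |x| < 1. -/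
open Finset

open scoped Classical in
noncomputable def fcoef (c : ℕ) (k : ℕ) : ℂ :=
  if ∃ n : ℕ, k = c ^ (n + 1) then 1 / (k : ℂ) else 0

lemma norm_fcoef_le (c k : ℕ) : ‖fcoef c k‖ ≤ 1 := by
  classical
  unfold fcoef
  split_ifs with h
  · obtain ⟨n, rfl⟩ := h
    rcases Nat.eq_zero_or_pos c with rfl | hc
    · simp
    · rw [norm_div, norm_one]
      have : (1:ℝ) ≤ ‖((c ^ (n+1) : ℕ) : ℂ)‖ := by
        rw [Complex.norm_natCast]
        exact_mod_cast Nat.one_le_iff_ne_zero.2 (pow_ne_zero _ (by omega))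
      rw [div_le_one (by linarith)]; linarith
  · simp

lemma fcoef_pow (c : ℕ) (hc : 2 ≤ c) (n : ℕ) :
    fcoef c (c ^ (n + 1)) = 1 / (c : ℂ) ^ (n + 1) := by
  classical
  unfold fcoef
  rw [if_pos ⟨n, rfl⟩]
  push_cast
  ring

/-- The Mahler-type function `F_c(x) = ∑_{n≥1} x^(c^n)/c^n`. -/
noncomputable def Fc (c : ℕ) (x : ℂ) : ℂ :=
  ∑' n : ℕ, x ^ (c ^ (n + 1)) / (c : ℂ) ^ (n + 1)

lemma summable_norm_fcoef (c : ℕ) {x : ℂ} (hx : ‖x‖ < 1) :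
    Summable fun k => ‖fcoef c k * x ^ k‖ := by
  apply Summable.of_nonneg_of_le (fun k => norm_nonneg _) (fun k => ?_)
    (summable_geometric_of_lt_one (norm_nonneg x) hx)
  rw [norm_mul, norm_pow]
  calc ‖fcoef c k‖ * ‖x‖ ^ k ≤ 1 * ‖x‖ ^ k := by
        gcongr; exact norm_fcoef_le c k
    _ = ‖x‖ ^ k := one_mul _

lemma Fc_eq (c : ℕ) (hc : 2 ≤ c) {x : ℂ} (hx : ‖x‖ < 1) :
    Fc c x = ∑' k, fcoef c k * x ^ k := by
  have hinj : Function.Injective (fun n : ℕ => c ^ (n + 1)) := by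
    intro a b hab
    have h1 : (1:ℕ) < c := hc
    have := Nat.pow_right_injective hc hab
    omega
  have h0 : Function.support (fun k => fcoef c k * x ^ k) ⊆
      Set.range (fun n : ℕ => c ^ (n + 1)) := by
    intro k hk
    by_contra hk'
    apply hk
    have : fcoef c k = 0 := by
      classical
      unfold fcoef
      rw [if_neg]
      rintro ⟨n, rfl⟩
      exact hk' ⟨n, rfl⟩
    simp [this]
  rw [← hinj.tsum_eq h0]
  unfold Fc
  apply tsum_congr
  intro n
  rw [fcoef_pow c hc]
  ring

lemma poly_tsum (P : Polynomial ℂ) (x : ℂ) :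
    P.eval x = ∑' k, P.coeff k * x ^ k := by
  rw [tsum_eq_sum (s := Finset.range (P.natDegree + 1))
    (fun k hk => by
      rw [Polynomial.coeff_eq_zero_of_natDegree_lt (by simpa using hk), zero_mul])]
  rw [Polynomial.eval_eq_sum_range]

lemma summable_norm_poly (P : Polynomial ℂ) (x : ℂ) :
    Summable fun k => ‖P.coeff k * x ^ k‖ :=
  summable_of_ne_finset_zero (s := Finset.range (P.natDegree + 1))
    (fun k hk => by
      rw [Polynomial.coeff_eq_zero_of_natDegree_lt (by simpa using hk), zero_mul,
        norm_zero])

/-- Key uniqueness lemma: a bounded power series vanishing on the disk has zero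
coefficients. -/
lemma coeffs_eq_zero (g : ℕ → ℂ) (M : ℝ) (hM : ∀ k, ‖g k‖ ≤ M)
    (h : ∀ x : ℂ, ‖x‖ < 1 → ∑' k, g k * x ^ k = 0) : ∀ k, g k = 0 := by
  intro k
  induction k using Nat.strong_induction_on with
  | _ k ih =>
  by_contra hk
  set ε := ‖g k‖ with hε
  have hε0 : 0 < ε := norm_pos_iff.2 hk
  have hM0 : 0 ≤ M := le_trans (norm_nonneg _) (hM k)
  set t : ℝ := min (1/2) (ε / (2*M+2)) with ht
  have ht0 : 0 < t := lt_min (by norm_num) (div_pos hε0 (by linarith))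
  have ht2 : t ≤ 1/2 := min_le_left _ _
  have htε : t * (2*M+2) ≤ ε := by
    rw [← le_div_iff₀ (by linarith)]
    exact min_le_right _ _
  set x : ℂ := ((t : ℝ) : ℂ) with hxdef
  have hxn : ‖x‖ = t := by
    simp [x, Complex.norm_real, abs_of_pos ht0]
  have hx1 : ‖x‖ < 1 := by rw [hxn]; linarith
  have hxne : x ≠ 0 := by
    simp only [x, ne_eq, Complex.ofReal_eq_zero]; exact ne_of_gt ht0
  -- summability of shifted series
  have hsum : ∀ s : ℕ, Summable fun j => g (j + s) * x ^ j := by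
    intro s
    apply Summable.of_norm
    apply Summable.of_nonneg_of_le (fun j => norm_nonneg _) (fun j => ?_)
      ((summable_geometric_of_lt_one (norm_nonneg x) hx1).mul_left M)
    rw [norm_mul, norm_pow]
    exact mul_le_mul (hM _) le_rfl (by positivity) hM0
  -- the full series at x vanishes
  have h0 := h x hx1
  -- shift: terms below k vanish by ih
  have hshift : ∑' j, g (j + k) * x ^ (j + k) = ∑' j, g j * x ^ j := by
    have hsupp : Function.support (fun m => g m * x ^ m) ⊆
        Set.range (fun j : ℕ => j + k) := by
      intro m hm
      by_contra hm'
      have hlt : m < k := by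
        by_contra hge
        exact hm' ⟨m - k, show m - k + k = m by omega⟩
      simp [ih m hlt] at hm
    exact Function.Injective.tsum_eq (f := fun m => g m * x ^ m)
      (add_left_injective k) hsupp
  have hS : (∑' j, g (j + k) * x ^ j) * x ^ k = 0 := by
    rw [← tsum_mul_right]
    calc ∑' j, g (j + k) * x ^ j * x ^ k
        = ∑' j, g (j + k) * x ^ (j + k) := by
          apply tsum_congr; intro j; rw [pow_add]; ring
      _ = ∑' j, g j * x ^ j := hshift
      _ = 0 := h0
  have hS0 : ∑' j, g (j + k) * x ^ j = 0 :=
    (mul_eq_zero.1 hS).resolve_right (pow_ne_zero _ hxne)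
  -- peel off the first term
  have hpeel : g k + ∑' j, g (j + 1 + k) * x ^ (j + 1) = 0 := by
    have := Summable.tsum_eq_zero_add (hsum k)
    rw [hS0] at this
    simp only [pow_zero, mul_one, zero_add] at this
    exact this.symm
  have hT : ‖∑' j, g (j + 1 + k) * x ^ (j + 1)‖ ≤ 2 * M * t := by
    have hgeo : HasSum (fun j : ℕ => M * t * t ^ j) (M * t * (1 - t)⁻¹) :=
      (hasSum_geometric_of_lt_one (le_of_lt ht0) (by linarith)).mul_left (M * t)
    have hb : ∀ j : ℕ, ‖g (j + 1 + k) * x ^ (j + 1)‖ ≤ M * t * t ^ j := by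
      intro j
      rw [norm_mul, norm_pow, hxn, pow_succ']
      calc ‖g (j + 1 + k)‖ * (t * t ^ j) ≤ M * (t * t ^ j) := by
            apply mul_le_mul (hM _) le_rfl (by positivity) hM0
        _ = M * t * t ^ j := by ring
    calc ‖∑' j, g (j + 1 + k) * x ^ (j + 1)‖ ≤ M * t * (1 - t)⁻¹ :=
          tsum_of_norm_bounded hgeo hb
      _ ≤ M * t * 2 := by
          apply mul_le_mul le_rfl ?_ (inv_nonneg.2 (by linarith))
            (mul_nonneg hM0 ht0.le)
          rw [inv_le_comm₀ (by linarith) (by norm_num)]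
          linarith
      _ = 2 * M * t := by ring
  have hfin : ε ≤ 2 * M * t := by
    have h1 : g k = -∑' j, g (j + 1 + k) * x ^ (j + 1) :=
      eq_neg_of_add_eq_zero_left hpeel
    rw [hε, h1, norm_neg]
    exact hT
  nlinarith

theorem stmt16 (c : ℕ) (hc : 2 ≤ c) :
    ¬ ∃ A B : Polynomial ℂ, B ≠ 0 ∧
      ∀ x : ℂ, ‖x‖ < 1 → B.eval x * Fc c x = A.eval x := by
  rintro ⟨A, B, hB, hAB⟩
  classical
  set conv : ℕ → ℂ :=
    fun N => ∑ j ∈ Finset.range (N+1), B.coeff j * fcoef c (N - j) with hconv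
  have hBs : Summable fun j => ‖B.coeff j‖ :=
    summable_of_ne_finset_zero (s := Finset.range (B.natDegree+1)) (fun k hk => by
      rw [Polynomial.coeff_eq_zero_of_natDegree_lt (by simpa using hk), norm_zero])
  have hAs : Summable fun j => ‖A.coeff j‖ :=
    summable_of_ne_finset_zero (s := Finset.range (A.natDegree+1)) (fun k hk => by
      rw [Polynomial.coeff_eq_zero_of_natDegree_lt (by simpa using hk), norm_zero])
  set M : ℝ := (∑' j, ‖B.coeff j‖) + ∑' j, ‖A.coeff j‖ with hMdef
  have hMb : ∀ N, ‖conv N - A.coeff N‖ ≤ M := by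
    intro N
    have h1 : ‖conv N‖ ≤ ∑' j, ‖B.coeff j‖ := by
      calc ‖conv N‖ ≤ ∑ j ∈ Finset.range (N+1), ‖B.coeff j * fcoef c (N - j)‖ :=
            norm_sum_le _ _
        _ ≤ ∑ j ∈ Finset.range (N+1), ‖B.coeff j‖ := by
            apply Finset.sum_le_sum
            intro j hj
            rw [norm_mul]
            calc ‖B.coeff j‖ * ‖fcoef c (N - j)‖ ≤ ‖B.coeff j‖ * 1 := by
                  gcongr; exact norm_fcoef_le _ _
              _ = ‖B.coeff j‖ := mul_one _
        _ ≤ ∑' j, ‖B.coeff j‖ :=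
            Summable.sum_le_tsum _ (fun j _ => norm_nonneg _) hBs
    have h2 : ‖A.coeff N‖ ≤ ∑' j, ‖A.coeff j‖ :=
      Summable.le_tsum hAs N (fun j _ => norm_nonneg _)
    calc ‖conv N - A.coeff N‖ ≤ ‖conv N‖ + ‖A.coeff N‖ := norm_sub_le _ _
      _ ≤ M := by rw [hMdef]; exact add_le_add h1 h2
  have key : ∀ x : ℂ, ‖x‖ < 1 → ∑' N, (conv N - A.coeff N) * x ^ N = 0 := by
    intro x hx
    have hBx := summable_norm_poly B x
    have hFx := summable_norm_fcoef c hx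
    have hterm : ∀ N : ℕ,
        (∑ j ∈ Finset.range (N+1),
          (B.coeff j * x ^ j) * (fcoef c (N - j) * x ^ (N - j)))
          = conv N * x ^ N := by
      intro N
      rw [hconv, Finset.sum_mul]
      apply Finset.sum_congr rfl
      intro j hj
      have hjN : j ≤ N := Nat.lt_succ_iff.1 (Finset.mem_range.1 hj)
      have hxp : x ^ j * x ^ (N - j) = x ^ N := by
        rw [← pow_add]; congr 1; omega
      calc (B.coeff j * x ^ j) * (fcoef c (N - j) * x ^ (N - j))
          = B.coeff j * fcoef c (N - j) * (x ^ j * x ^ (N - j)) := by ring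
        _ = B.coeff j * fcoef c (N - j) * x ^ N := by rw [hxp]
    have hcauchy : B.eval x * Fc c x = ∑' N, conv N * x ^ N := by
      rw [Fc_eq c hc hx, poly_tsum B x,
        tsum_mul_tsum_eq_tsum_sum_range_of_summable_norm hBx hFx]
      exact tsum_congr hterm
    have hconvS : Summable fun N => conv N * x ^ N := by
      have h := (hasSum_sum_range_mul_of_summable_norm hBx hFx).summable
      exact h.congr hterm
    have hAx : Summable fun N => A.coeff N * x ^ N := (summable_norm_poly A x).of_norm
    have hsplit : ∀ N, (conv N - A.coeff N) * x ^ N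
        = conv N * x ^ N - A.coeff N * x ^ N := fun N => by ring
    calc ∑' N, (conv N - A.coeff N) * x ^ N
        = ∑' N, (conv N * x ^ N - A.coeff N * x ^ N) := tsum_congr hsplit
      _ = (∑' N, conv N * x ^ N) - ∑' N, A.coeff N * x ^ N :=
          Summable.tsum_sub hconvS hAx
      _ = B.eval x * Fc c x - A.eval x := by rw [hcauchy, poly_tsum A x]
      _ = 0 := by rw [hAB x hx, sub_self]
  have hzero := coeffs_eq_zero _ M hMb key
  -- combinatorial contradiction
  set m := B.natTrailingDegree with hm
  set D := B.natDegree with hD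
  set n := D + A.natDegree + m + 2 with hn
  have hc1 : 1 < c := hc
  have hcn : D + A.natDegree + m + 1 < c ^ n := by
    have := Nat.lt_pow_self (n := n) hc1
    omega
  have hcn' : D < c ^ n := by omega
  have hmD : m ≤ D := Polynomial.natTrailingDegree_le_natDegree B
  set N := c ^ (n+1) + m with hN
  have hpow : c ^ n < c ^ (n+1) := Nat.pow_lt_pow_right hc1 (Nat.lt_succ_self n)
  have hgap : c ^ n + D < c ^ (n+1) := by
    have : 2 * c ^ n ≤ c ^ (n+1) := by
      rw [pow_succ]
      calc 2 * c ^ n = c ^ n * 2 := by ring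
        _ ≤ c ^ n * c := by gcongr
    omega
  have hAN : A.coeff N = 0 := by
    apply Polynomial.coeff_eq_zero_of_natDegree_lt
    have : A.natDegree < c ^ n := by omega
    omega
  have hconvN : conv N = B.coeff m * fcoef c (c ^ (n+1)) := by
    show (∑ j ∈ Finset.range (N+1), B.coeff j * fcoef c (N - j))
      = B.coeff m * fcoef c (c ^ (n+1))
    have hmem : m ∈ Finset.range (N+1) := Finset.mem_range.2 (by omega)
    rw [Finset.sum_eq_single_of_mem m hmem ?_]
    · have hNm : N - m = c ^ (n+1) := by omega
      rw [hNm]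
    · intro j hj hjm
      rcases lt_or_gt_of_ne hjm with hlt | hgt
      · rw [Polynomial.coeff_eq_zero_of_lt_natTrailingDegree hlt, zero_mul]
      · rcases le_or_gt j D with hjD | hjD
        · have hfz : fcoef c (N - j) = 0 := by
            unfold fcoef
            rw [if_neg]
            rintro ⟨t, ht⟩
            have hub : N - j < c ^ (n+1) := by omega
            have hlb : c ^ (n+1) - D ≤ N - j := by omega
            have h1 : c ^ (t+1) < c ^ (n+1) := by omega
            have h2 : t + 1 < n + 1 := (Nat.pow_lt_pow_iff_right hc1).1 h1
            have h3 : c ^ (t+1) ≤ c ^ n := Nat.pow_le_pow_right (by omega) (by omega)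
            omega
          rw [hfz, mul_zero]
        · rw [Polynomial.coeff_eq_zero_of_natDegree_lt hjD, zero_mul]
  have hBm : B.coeff m ≠ 0 := by
    rw [hm]
    exact mt Polynomial.trailingCoeff_eq_zero.1 hB
  have hfne : fcoef c (c ^ (n+1)) ≠ 0 := by
    rw [fcoef_pow c hc]
    exact one_div_ne_zero (pow_ne_zero _ (Nat.cast_ne_zero.2 (by omega)))
  have := hzero N
  rw [hAN, sub_zero, hconvN] at this
  exact (mul_ne_zero hBm hfne) this
end

section
/- Let n ≥ 1 be an integer and let q_1, q_2, …, q_{φ(5^n)} be the digits produced by the base-3 algorithm for 1/5^n. Then: the number of i ≤ φ(5^n) with q_i = 0 equals 4·⌊5^n/15⌋ + 1 if n is odd and 4·⌊5^n/15⌋ + 3 if n is even; the number of i ≤ φ(5^n) with q_i = 1 equals 4·⌊5^n/15⌋ + 2 for all n; and the number of i ≤ φ(5^n) with q_i = 2 equals 4·⌊5^n/15⌋ + 1 if n is odd and 4·⌊5^n/15⌋ + 3 if n is even. -/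
open Finset


lemma keypow (k : ℕ) : ∃ c : ℤ, (3:ℤ)^(4*5^k) = 1 + 5^(k+1) * c ∧ c % 5 = 1 := by
  induction k with
  | zero => exact ⟨16, by norm_num⟩
  | succ k ih =>
    obtain ⟨c, hc, hc5⟩ := ih
    refine ⟨c + 2*5^(k+1)*c^2 + 2*(5^(k+1))^2*c^3 + (5^(k+1))^3*c^4 + 5^k*(5^(k+1))^3*c^5, ?_, ?_⟩
    · have h1 : 4*5^(k+1) = (4*5^k)*5 := by ring
      rw [h1, pow_mul, hc]
      have hP : (5:ℤ)^(k+1) = 5 * 5^k := by ring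
      rw [hP]; ring
    · have h5 : (5:ℤ) ∣ (2*5^(k+1)*c^2 + 2*(5^(k+1))^2*c^3 + (5^(k+1))^3*c^4 + 5^k*(5^(k+1))^3*c^5) := by
        refine ⟨2*5^k*c^2 + 2*5^k*5^(k+1)*c^3 + 5^k*(5^(k+1))^2*c^4 + 5^k*5^k*(5^(k+1))^2*c^5, ?_⟩
        rw [show ((5:ℤ)^(k+1)) = 5*5^k from by ring]; ring
      obtain ⟨d, hd⟩ := h5
      omega

lemma tot5 (n : ℕ) (hn : 1 ≤ n) : Nat.totient (5^n) = 4 * 5^(n-1) := by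
  rw [Nat.totient_prime_pow (by norm_num) (by omega)]
  cases n with
  | zero => omega
  | succ m => simp [pow_succ, mul_comm]

lemma cop3 (n : ℕ) : Nat.Coprime 3 (5^n) :=
  Nat.Coprime.pow_right n (by norm_num)

lemma ord3 (n : ℕ) (hn : 1 ≤ n) : orderOf (3 : ZMod (5^n)) = 4 * 5^(n-1) := by
  have hne : NeZero (5^n) := ⟨by positivity⟩
  apply orderOf_eq_of_pow_and_pow_div_prime (by positivity)
  · have h := Nat.ModEq.pow_totient (cop3 n)
    rw [tot5 n hn] at h
    have := (ZMod.natCast_eq_natCast_iff _ _ _).mpr h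
    push_cast at this
    exact_mod_cast this
  · intro p hp hpd
    have hp25 : p = 2 ∨ p = 5 := by
      rcases (Nat.Prime.dvd_mul hp).mp (show p ∣ 4 * 5^(n-1) from hpd) with h | h
      · have h4 := Nat.le_of_dvd (by norm_num) h
        have h2 := hp.two_le
        interval_cases p
        · left; rfl
        · norm_num at h
        · norm_num at hp
      · right; exact (Nat.prime_dvd_prime_iff_eq hp (by norm_num)).mp (hp.dvd_of_dvd_pow h)
    intro hpow
    have key : (3:ℕ) ^ (4 * 5^(n-1) / p) ≡ 1 [MOD 5^n] := by
      refine (ZMod.natCast_eq_natCast_iff _ _ _).mp ?_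
      push_cast
      exact_mod_cast hpow
    rcases hp25 with rfl | rfl
    · have hd : 4 * 5^(n-1) / 2 = 2 * 5^(n-1) := by omega
      rw [hd] at key
      have key5 : (3:ℕ) ^ (2 * 5^(n-1)) ≡ 1 [MOD 5] :=
        key.of_dvd (dvd_pow_self 5 (by omega))
      have hodd : Odd (5^(n-1)) := Odd.pow ⟨2, rfl⟩
      obtain ⟨j, hj⟩ := hodd
      have h4 : (3:ℕ)^(2*5^(n-1)) ≡ 4 [MOD 5] := by
        have he : (3:ℕ)^(2*5^(n-1)) = 81^j * 9 := by
          rw [hj, show 2*(2*j+1) = 4*j+2 from by ring, pow_add, pow_mul]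
          norm_num
        rw [he]
        calc (81:ℕ)^j * 9 ≡ 1^j * 9 [MOD 5] :=
              Nat.ModEq.mul ((by decide : (81:ℕ) ≡ 1 [MOD 5]).pow j) rfl
          _ ≡ 4 [MOD 5] := by rw [one_pow]; decide
      exact absurd (h4.symm.trans key5) (by decide)
    · have h5 : 5 ∣ 4 * 5^(n-1) := hpd
      have hn2 : 2 ≤ n := by
        by_contra h
        have : n = 1 := by omega
        subst this; simp at h5
      have hd : 4 * 5^(n-1) / 5 = 4 * 5^(n-2) := by
        have : n - 1 = (n-2) + 1 := by omega
        rw [this, pow_succ]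
        omega
      rw [hd] at key
      obtain ⟨c, hc, hc5⟩ := keypow (n-2)
      have keyZ : (3:ℤ) ^ (4 * 5^(n-2)) % (5^n) = 1 % 5^n := by
        have := congrArg (Nat.cast : ℕ → ℤ) key
        push_cast at this
        exact_mod_cast this
      have hdvd : (5:ℤ)^n ∣ (3:ℤ)^(4*5^(n-2)) - 1 := Int.ModEq.dvd keyZ.symm
      rw [hc] at hdvd
      have h2 : (5:ℤ)^(n-2+1) * 5 ∣ 5^(n-2+1) * c := by
        have : (5:ℤ)^n = 5^(n-2+1) * 5 := by
          rw [← pow_succ]; congr 1; omega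
        rw [← this]
        simpa using hdvd
      have h3 : (5:ℤ) ∣ c := (mul_dvd_mul_iff_left (by positivity : (5:ℤ)^(n-2+1) ≠ 0)).mp h2
      obtain ⟨d, hd'⟩ := h3
      omega


lemma count5 (N : ℕ) : ((range N).filter (fun r => ¬ 5 ∣ r)).card = N - (N+4)/5 := by
  induction N with
  | zero => simp
  | succ N ih =>
    rw [Finset.range_add_one, Finset.filter_insert]
    by_cases h : 5 ∣ N
    · rw [if_neg (by simpa using h), ih]
      omega
    · rw [if_pos (by simpa using h), Finset.card_insert_of_notMem (by simp)]
      rw [ih]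
      omega

lemma countIco (a b : ℕ) (hab : a ≤ b) :
    ((Finset.Ico a b).filter (fun r => ¬ 5 ∣ r)).card
      = (b - (b+4)/5) - (a - (a+4)/5) := by
  have hsplit : Finset.range a ∪ Finset.Ico a b = Finset.range b := by
    rw [Finset.range_eq_Ico, Finset.range_eq_Ico]
    exact Finset.Ico_union_Ico_eq_Ico (by omega) hab
  have hdisj : Disjoint (Finset.range a) (Finset.Ico a b) := by
    simp [Finset.disjoint_left]
    intro x hx; omega
  have := count5 b
  rw [← hsplit, Finset.filter_union, Finset.card_union_of_disjoint
    (Finset.disjoint_filter_filter hdisj), count5 a] at this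
  have hle : a - (a+4)/5 ≤ b - (b+4)/5 := by omega
  omega

lemma div_eq_iff' {m r d : ℕ} (hm : 0 < m) : r / m = d ↔ d * m ≤ r ∧ r < (d+1)*m := by
  constructor
  · rintro rfl
    exact ⟨Nat.div_mul_le_self r m,
      (Nat.div_lt_iff_lt_mul hm).mp (Nat.lt_succ_self _)⟩
  · rintro ⟨h1, h2⟩
    exact le_antisymm (Nat.lt_succ_iff.mp ((Nat.div_lt_iff_lt_mul hm).mpr h2))
      ((Nat.le_div_iff_mul_le hm).mpr h1)

lemma m15 (n : ℕ) (hn : 1 ≤ n) :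
    (n % 2 = 1 ∧ 5^n % 15 = 5) ∨ (n % 2 = 0 ∧ 5^n % 15 = 10) := by
  induction n, hn using Nat.le_induction with
  | base => norm_num
  | succ n hn ih =>
    have hs : 5^(n+1) % 15 = (5^n % 15) * 5 % 15 := by
      rw [pow_succ, Nat.mul_mod]
    omega

lemma inj_aux (n : ℕ) (hn : 1 ≤ n) {i j : ℕ} (hi : 1 ≤ i) (hj : j ≤ Nat.totient (5^n))
    (hij : i ≤ j) (h : 3^(i-1) % 5^n = 3^(j-1) % 5^n) : i = j := by
  by_contra hne
  have h1 : 3^(i-1) * 1 ≡ 3^(i-1) * 3^(j-i) [MOD 5^n] := by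
    rw [mul_one, ← pow_add, show i - 1 + (j - i) = j - 1 from by omega]
    exact h
  have h2 : (1:ℕ) ≡ 3^(j-i) [MOD 5^n] :=
    Nat.ModEq.cancel_left_of_coprime (((cop3 n).pow_left (i-1)).symm) h1
  have h3 : (3 : ZMod (5^n))^(j-i) = 1 := by
    have := (ZMod.natCast_eq_natCast_iff _ _ _).mpr h2.symm
    push_cast at this
    exact_mod_cast this
  have h4 := orderOf_dvd_of_pow_eq_one h3
  rw [ord3 n hn] at h4
  have h5 := Nat.le_of_dvd (by omega) h4
  rw [tot5 n hn] at hj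
  omega

theorem stmt19 (n : ℕ) (hn : 1 ≤ n) (q : ℕ → ℕ)
    (hq : ∀ i, 1 ≤ i → q i = (3 ^ (i - 1) % 5 ^ n) * 3 / 5 ^ n) :
    ((Finset.Icc 1 (Nat.totient (5 ^ n))).filter (fun i => q i = 0)).card =
      (if Odd n then 4 * (5 ^ n / 15) + 1 else 4 * (5 ^ n / 15) + 3) ∧
    ((Finset.Icc 1 (Nat.totient (5 ^ n))).filter (fun i => q i = 1)).card =
      4 * (5 ^ n / 15) + 2 ∧
    ((Finset.Icc 1 (Nat.totient (5 ^ n))).filter (fun i => q i = 2)).card =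
      (if Odd n then 4 * (5 ^ n / 15) + 1 else 4 * (5 ^ n / 15) + 3) := by
  have hm : 0 < 5^n := by positivity
  have hm5 : 5 ≤ 5^n := by
    calc (5:ℕ) = 5^1 := (pow_one 5).symm
    _ ≤ 5^n := Nat.pow_le_pow_right (by norm_num) hn
  set A : Finset ℕ := Finset.Icc 1 (Nat.totient (5^n)) with hA
  set f : ℕ → ℕ := fun i => 3^(i-1) % 5^n with hf
  set B : Finset ℕ := (Finset.range (5^n)).filter (fun r => (5^n).Coprime r) with hB
  have hinj : ∀ i ∈ A, ∀ j ∈ A, f i = f j → i = j := by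
    intro i hi j hj hfij
    simp only [hA, Finset.mem_Icc] at hi hj
    rcases le_total i j with h | h
    · exact inj_aux n hn hi.1 hj.2 h hfij
    · exact (inj_aux n hn hj.1 hi.2 h hfij.symm).symm
  have hmaps : ∀ i ∈ A, f i ∈ B := by
    intro i hi
    simp only [hB, Finset.mem_filter, Finset.mem_range]
    refine ⟨Nat.mod_lt _ hm, ?_⟩
    have h1 : Nat.Coprime (3^(i-1)) (5^n) := (cop3 n).pow_left _
    have h2 : Nat.Coprime (3^(i-1) % 5^n) (5^n) := by
      rw [Nat.Coprime, ← Nat.gcd_rec]; exact h1.symm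
    exact h2.symm
  have hcardA : A.card = Nat.totient (5^n) := by simp [hA, Nat.card_Icc]
  have hcardB : B.card = Nat.totient (5^n) := by rw [Nat.totient]
  have himg : A.image f = B := by
    apply Finset.eq_of_subset_of_card_le
    · intro r hr
      obtain ⟨i, hi, rfl⟩ := Finset.mem_image.mp hr
      exact hmaps i hi
    · rw [Finset.card_image_of_injOn fun a ha b hb => hinj a ha b hb, hcardA, hcardB]
  have key : ∀ d : ℕ, (A.filter (fun i => q i = d)).card
      = (B.filter (fun r => r * 3 / 5^n = d)).card := by
    intro d
    have h1 : A.filter (fun i => q i = d) = A.filter (fun i => (f i) * 3 / 5^n = d) := by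
      apply Finset.filter_congr
      intro i hi
      rw [hq i (Finset.mem_Icc.mp hi).1]
    rw [h1, ← himg, Finset.filter_image,
      Finset.card_image_of_injOn fun a ha b hb =>
        hinj a (Finset.mem_of_mem_filter _ ha) b (Finset.mem_of_mem_filter _ hb)]
  have hcop : ∀ r, (5^n).Coprime r ↔ ¬ 5 ∣ r := by
    intro r
    rw [Nat.coprime_pow_left_iff (show 0 < n by omega)]
    exact Nat.Prime.coprime_iff_not_dvd (by norm_num)
  have hB0 : B.filter (fun r => r*3/5^n = 0)
      = (Finset.Ico 0 ((5^n+2)/3)).filter (fun r => ¬ 5 ∣ r) := by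
    ext r
    simp only [hB, Finset.mem_filter, Finset.mem_range, Finset.mem_Ico, hcop, div_eq_iff' hm]
    omega
  have hB1 : B.filter (fun r => r*3/5^n = 1)
      = (Finset.Ico ((5^n+2)/3) ((2*5^n+2)/3)).filter (fun r => ¬ 5 ∣ r) := by
    ext r
    simp only [hB, Finset.mem_filter, Finset.mem_range, Finset.mem_Ico, hcop, div_eq_iff' hm]
    omega
  have hB2 : B.filter (fun r => r*3/5^n = 2)
      = (Finset.Ico ((2*5^n+2)/3) (5^n)).filter (fun r => ¬ 5 ∣ r) := by
    ext r
    simp only [hB, Finset.mem_filter, Finset.mem_range, Finset.mem_Ico, hcop, div_eq_iff' hm]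
    omega
  have c0 := countIco 0 ((5^n+2)/3) (by omega)
  have c1 := countIco ((5^n+2)/3) ((2*5^n+2)/3) (by omega)
  have c2 := countIco ((2*5^n+2)/3) (5^n) (by omega)
  rcases m15 n hn with ⟨hpar, hmod⟩ | ⟨hpar, hmod⟩
  · have hodd : Odd n := Nat.odd_iff.mpr hpar
    rw [if_pos hodd]
    refine ⟨?_, ?_, ?_⟩
    · rw [key 0, hB0, c0]; omega
    · rw [key 1, hB1, c1]; omega
    · rw [key 2, hB2, c2]; omega
  · have hodd : ¬ Odd n := by rw [Nat.odd_iff]; omega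
    rw [if_neg hodd]
    refine ⟨?_, ?_, ?_⟩
    · rw [key 0, hB0, c0]; omega
    · rw [key 1, hB1, c1]; omega
    · rw [key 2, hB2, c2]; omega
end
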